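/- arXiv:2605.12844 — 3 statements merged into one kernel-verified Lean document; each statement's English description precedes it below -/
import Mathlib

section
/- Let d, s, n be positive integers and fix an initial ensemble Z_0 in (ℝ^d)^n (all n rows may be equal to a common starting point). Let φ : ℝ^d × [0,1)^s → ℝ^d be a measurable one-step update map and let Φ : (ℝ^d)^n × ([0,1)^s)^n → (ℝ^d)^n apply φ row by row, i.e. Φ(Z, X)_i = φ(Z_i, X_i) for i = 1,…,n. Let π : (ℝ^d)^n → Sym(n) be any measurable permutation-valued sorting rule (in the paper, the rule induced by sorting Hilbert-curve keys of the rows; the proof uses only measurability). Let (X_k)_{k≥1} and (X'_k)_{k≥1} be two families of random n×s arrays, each array having n independent rows uniformly distributed on [0,1)^s, with arrays independent across k and the two families independent of everything else. Define the plain Monte Carlo chain Z_k^{MC} = Φ(Z_{k−1}^{MC}, X_k) with Z_0^{MC} = Z_0, and the array chain Z_k^{AMC} = Φ(Z_{k−1}^{AMC}, σ_k · X'_k) with Z_0^{AMC} = Z_0, where σ_k = π(Z_{k−1}^{AMC}) and σ · X denotes the array whose i-th row is the σ(i)-th row of X. Then for every k ≥ 0, the random ensembles Z_k^{MC} and Z_k^{AMC}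 have the same distribution on (ℝ^d)^n. -/
open MeasureTheory ProbabilityTheory

/-- Auxiliary: the product of `n` copies of a sigma-finite measure is invariant
under permutations of the coordinates. -/
lemma aux_perm_pi_map {n : ℕ} {α : Type*} [MeasurableSpace α] (μ1 : Measure α)
    [SigmaFinite μ1] (σ : Equiv.Perm (Fin n)) :
    Measure.map (fun x (i : Fin n) => x (σ i)) (Measure.pi fun _ : Fin n => μ1)
      = Measure.pi fun _ : Fin n => μ1 := by
  refine (Measure.pi_eq fun t ht => ?_).symm
  have hm : Measurable fun (x : Fin n → α) (i : Fin n) => x (σ i) :=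
    measurable_pi_lambda _ fun i => measurable_pi_apply _
  rw [Measure.map_apply hm (MeasurableSet.univ_pi ht)]
  have hpre : (fun x (i : Fin n) => x (σ i)) ⁻¹' Set.pi Set.univ t
      = Set.pi Set.univ (fun j => t (σ.symm j)) := by
    ext x
    simp only [Set.mem_preimage, Set.mem_pi, Set.mem_univ, true_implies]
    constructor
    · intro h j
      have := h (σ.symm j)
      rwa [Equiv.apply_symm_apply] at this
    · intro h i
      have := h (σ i)
      rwa [Equiv.symm_apply_apply] at this
  rw [hpre, Measure.pi_pi]
  exact Equiv.prod_comp σ.symm fun j => μ1 (t j)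

/-- Auxiliary: evaluating a function at a coordinate chosen by a measurable
permutation-valued rule is measurable. -/
lemma aux_meas_perm_eval {n : ℕ} {E α : Type*} [MeasurableSpace E] [MeasurableSpace α]
    (π : E → Equiv.Perm (Fin n)) (hπ : ∀ σ, MeasurableSet {e : E | π e = σ})
    {β : Type*} [MeasurableSpace β] {g : β → E} (hg : Measurable g)
    {h : β → Fin n → α} (hh : Measurable h) (i : Fin n) :
    Measurable fun b => h b (π (g b) i) := by
  intro M hM
  have hpre : (fun b => h b (π (g b) i)) ⁻¹' M
      = ⋃ σ : Equiv.Perm (Fin n),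
          (g ⁻¹' {e | π e = σ}) ∩ ((fun b => h b (σ i)) ⁻¹' M) := by
    ext b
    simp only [Set.mem_preimage, Set.mem_iUnion, Set.mem_inter_iff, Set.mem_setOf_eq]
    constructor
    · intro hb
      exact ⟨π (g b), rfl, hb⟩
    · rintro ⟨σ, hσ, hb⟩
      rw [hσ]
      exact hb
  rw [hpre]
  exact MeasurableSet.iUnion fun σ =>
    (hg (hπ σ)).inter (((measurable_pi_apply (σ i)).comp hh) hM)

/-- Auxiliary: if `Z` and `W` are independent, `W` has a permutation-invariant
law `ν`, and `π` is a measurable permutation-valued rule, then the pair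
`(Z, π(Z)·W)` has law `(law Z) ⊗ ν`. -/
lemma aux_pair_perm_law {Ω : Type*} [MeasurableSpace Ω] (P : Measure Ω)
    [IsProbabilityMeasure P] {n : ℕ} {E α : Type*} [MeasurableSpace E] [MeasurableSpace α]
    (π : E → Equiv.Perm (Fin n)) (hπ : ∀ σ, MeasurableSet {e : E | π e = σ})
    {Z : Ω → E} (hZ : Measurable Z) {W : Ω → Fin n → α} (hW : Measurable W)
    (ν : Measure (Fin n → α)) [IsProbabilityMeasure ν]
    (hν : Measure.map W P = ν)
    (hperm : ∀ σ : Equiv.Perm (Fin n), Measure.map (fun x (i : Fin n) => x (σ i)) ν = ν)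
    (hindep : IndepFun Z W P) :
    Measure.map (fun ω => (Z ω, fun i => W ω (π (Z ω) i))) P = (Measure.map Z P).prod ν := by
  haveI : IsProbabilityMeasure (Measure.map Z P) := Measure.isProbabilityMeasure_map hZ.aemeasurable
  have hpair : Measurable fun ω => (Z ω, fun i => W ω (π (Z ω) i)) :=
    hZ.prodMk (measurable_pi_lambda _ fun i => aux_meas_perm_eval π hπ hZ hW i)
  have hmeasperm : ∀ σ : Equiv.Perm (Fin n),
      Measurable (fun x : Fin n → α => fun i => x (σ i)) :=
    fun σ => measurable_pi_lambda _ fun i => measurable_pi_apply _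
  refine (Measure.prod_eq fun A B hA hB => ?_).symm
  rw [Measure.map_apply hpair (hA.prod hB)]
  have hdecomp : (fun ω => (Z ω, fun i => W ω (π (Z ω) i))) ⁻¹' (A ×ˢ B)
      = ⋃ σ : Equiv.Perm (Fin n),
          ((Z ⁻¹' (A ∩ {e | π e = σ})) ∩ (W ⁻¹' ((fun x (i : Fin n) => x (σ i)) ⁻¹' B))) := by
    ext ω
    simp only [Set.mem_preimage, Set.mem_prod, Set.mem_iUnion, Set.mem_inter_iff,
      Set.mem_setOf_eq]
    constructor
    · rintro ⟨h1, h2⟩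
      exact ⟨π (Z ω), ⟨h1, rfl⟩, h2⟩
    · rintro ⟨σ, ⟨h1, hσ⟩, h2⟩
      refine ⟨h1, ?_⟩
      rw [hσ]
      exact h2
  have hdisj : Pairwise (Function.onFun Disjoint fun σ : Equiv.Perm (Fin n) =>
      (Z ⁻¹' (A ∩ {e | π e = σ})) ∩ (W ⁻¹' ((fun x (i : Fin n) => x (σ i)) ⁻¹' B))) := by
    intro σ τ hστ
    rw [Function.onFun, Set.disjoint_left]
    rintro ω ⟨hω1, -⟩ ⟨hω2, -⟩
    exact hστ (hω1.2.symm.trans hω2.2)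
  rw [hdecomp, measure_iUnion hdisj fun σ =>
    (hZ (hA.inter (hπ σ))).inter (hW ((hmeasperm σ) hB))]
  have hterm : ∀ σ : Equiv.Perm (Fin n),
      P ((Z ⁻¹' (A ∩ {e | π e = σ})) ∩ (W ⁻¹' ((fun x (i : Fin n) => x (σ i)) ⁻¹' B)))
        = P (Z ⁻¹' (A ∩ {e | π e = σ})) * ν B := by
    intro σ
    rw [hindep.measure_inter_preimage_eq_mul _ _ (hA.inter (hπ σ)) ((hmeasperm σ) hB)]
    congr 1
    rw [← Measure.map_apply hW ((hmeasperm σ) hB), hν]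
    conv_rhs => rw [← hperm σ]
    rw [Measure.map_apply (hmeasperm σ) hB]
  have hAsplit : P (Z ⁻¹' A)
      = ∑' σ : Equiv.Perm (Fin n), P (Z ⁻¹' (A ∩ {e | π e = σ})) := by
    have hcover : Z ⁻¹' A = ⋃ σ : Equiv.Perm (Fin n), Z ⁻¹' (A ∩ {e | π e = σ}) := by
      ext ω
      simp only [Set.mem_preimage, Set.mem_iUnion, Set.mem_inter_iff, Set.mem_setOf_eq]
      constructor
      · intro h
        exact ⟨π (Z ω), h, rfl⟩
      · rintro ⟨σ, h, -⟩
        exact h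
    have hdisj' : Pairwise (Function.onFun Disjoint fun σ : Equiv.Perm (Fin n) =>
        Z ⁻¹' (A ∩ {e | π e = σ})) := by
      intro σ τ hστ
      rw [Function.onFun, Set.disjoint_left]
      rintro ω ⟨-, hω1⟩ ⟨-, hω2⟩
      exact hστ (hω1.symm.trans hω2)
    rw [hcover, measure_iUnion hdisj' fun σ => hZ (hA.inter (hπ σ))]
  calc (∑' σ : Equiv.Perm (Fin n),
        P ((Z ⁻¹' (A ∩ {e | π e = σ})) ∩ (W ⁻¹' ((fun x (i : Fin n) => x (σ i)) ⁻¹' B))))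
      = ∑' σ : Equiv.Perm (Fin n), P (Z ⁻¹' (A ∩ {e | π e = σ})) * ν B :=
        tsum_congr hterm
    _ = (∑' σ : Equiv.Perm (Fin n), P (Z ⁻¹' (A ∩ {e | π e = σ}))) * ν B :=
        ENNReal.tsum_mul_right
    _ = P (Z ⁻¹' A) * ν B := by rw [← hAsplit]
    _ = Measure.map Z P A * ν B := by rw [Measure.map_apply hZ hA]

/-- let `Φ` apply a measurable one-step update map
`φ : ℝ^d × [0,1)^s → ℝ^d` row by row to an ensemble of `n` walkers, and let
`π` be a measurable permutation-valued sorting rule (e.g. the Hilbert-curve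
sort; measurability expressed via level sets).  Drive the plain Monte Carlo
chain `Z_k^{MC} = Φ(Z_{k−1}^{MC}, X_k)` and the array chain
`Z_k^{AMC} = Φ(Z_{k−1}^{AMC}, π(Z_{k−1}^{AMC})·X'_k)` from the same initial
ensemble `Z₀`, where the rows of all the arrays `X_k, X'_k` (indexed by
`(ℕ × Fin n) ⊕ (ℕ × Fin n)`) are mutually independent and uniform on `[0,1)^s`,
and `(σ·X)ᵢ = X_{σ(i)}`.  Then for every `k`, the ensembles `Z_k^{MC}` and
`Z_k^{AMC}` have the same distribution on `(ℝ^d)^n`. -/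
theorem stmt_0 {Ω : Type*} [MeasurableSpace Ω] (P : Measure Ω) [IsProbabilityMeasure P]
    (d s n : ℕ) (hd : 0 < d) (hs : 0 < s) (hn : 0 < n)
    (Z0 : Fin n → Fin d → ℝ)
    (φ : (Fin d → ℝ) × (Fin s → ℝ) → Fin d → ℝ) (hφ : Measurable φ)
    (π : (Fin n → Fin d → ℝ) → Equiv.Perm (Fin n))
    (hπ : ∀ σ : Equiv.Perm (Fin n), MeasurableSet {E : Fin n → Fin d → ℝ | π E = σ})
    (X X' : ℕ → Ω → Fin n → Fin s → ℝ)
    (hXmeas : ∀ k, Measurable (X k)) (hX'meas : ∀ k, Measurable (X' k))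
    (hiid : iIndepFun
      (Sum.elim (fun (p : ℕ × Fin n) (ω : Ω) => X p.1 ω p.2)
        (fun (p : ℕ × Fin n) (ω : Ω) => X' p.1 ω p.2)) P)
    (hunif : ∀ q : (ℕ × Fin n) ⊕ (ℕ × Fin n),
      Measure.map
          (Sum.elim (fun p (ω : Ω) => X p.1 ω p.2) (fun p (ω : Ω) => X' p.1 ω p.2) q) P
        = Measure.pi fun _ : Fin s => volume.restrict (Set.Ico (0 : ℝ) 1))
    (ZMC ZAMC : ℕ → Ω → Fin n → Fin d → ℝ)
    (hMC0 : ∀ ω, ZMC 0 ω = Z0)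
    (hMC : ∀ k ω i, ZMC (k + 1) ω i = φ (ZMC k ω i, X (k + 1) ω i))
    (hAMC0 : ∀ ω, ZAMC 0 ω = Z0)
    (hAMC : ∀ k ω i,
      ZAMC (k + 1) ω i = φ (ZAMC k ω i, X' (k + 1) ω (π (ZAMC k ω) i))) :
    ∀ k : ℕ, Measure.map (ZMC k) P = Measure.map (ZAMC k) P := by
  classical
  -- notation
  set Y : (ℕ × Fin n) ⊕ (ℕ × Fin n) → Ω → Fin s → ℝ :=
    Sum.elim (fun p (ω : Ω) => X p.1 ω p.2) (fun p (ω : Ω) => X' p.1 ω p.2) with hY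
  have hYmeas : ∀ q, Measurable (Y q) := by
    rintro (p | p)
    · exact (measurable_pi_apply p.2).comp (hXmeas p.1)
    · exact (measurable_pi_apply p.2).comp (hX'meas p.1)
  set μ1 : Measure (Fin s → ℝ) := Measure.pi fun _ : Fin s => volume.restrict (Set.Ico (0 : ℝ) 1)
    with hμ1
  haveI hprob1 : ∀ i : Fin s, IsProbabilityMeasure ((fun _ : Fin s =>
      volume.restrict (Set.Ico (0 : ℝ) 1)) i) := by
    intro i
    constructor
    rw [Measure.restrict_apply_univ, Real.volume_Ico]
    norm_num
  haveI : IsProbabilityMeasure μ1 := by rw [hμ1]; infer_instance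
  set μn : Measure (Fin n → Fin s → ℝ) := Measure.pi fun _ : Fin n => μ1 with hμn
  haveI : IsProbabilityMeasure μn := by rw [hμn]; infer_instance
  -- the law of each full array is `μn`
  have harr : ∀ (W : ℕ → Ω → Fin n → Fin s → ℝ)
      (emb : ℕ × Fin n → (ℕ × Fin n) ⊕ (ℕ × Fin n)),
      Function.Injective emb → (∀ p ω, Y (emb p) ω = W p.1 ω p.2) →
      (∀ k, Measurable (W k)) → ∀ k, Measure.map (W k) P = μn := by
    intro W emb hinj hWY hWmeas k
    refine (Measure.pi_eq fun t ht => ?_).symm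
    rw [Measure.map_apply (hWmeas k) (MeasurableSet.univ_pi ht)]
    set T : (ℕ × Fin n) ⊕ (ℕ × Fin n) → Set (Fin s → ℝ) := fun q =>
      if h : ∃ i : Fin n, q = emb (k, i) then t h.choose else Set.univ with hT
    set S : Finset ((ℕ × Fin n) ⊕ (ℕ × Fin n)) :=
      Finset.image (fun i : Fin n => emb (k, i)) Finset.univ with hS
    have hTval : ∀ i : Fin n, T (emb (k, i)) = t i := by
      intro i
      have hex : ∃ j : Fin n, emb (k, i) = emb (k, j) := ⟨i, rfl⟩
      have hchoose : hex.choose = i := by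
        have h1 := hex.choose_spec
        have h2 : ((k, i) : ℕ × Fin n) = (k, hex.choose) := hinj h1
        exact (congrArg Prod.snd h2).symm
      simp only [hT, dif_pos hex, hchoose]
    have hinter : W k ⁻¹' Set.pi Set.univ t = ⋂ q ∈ S, Y q ⁻¹' T q := by
      ext ω
      simp only [Set.mem_preimage, Set.mem_pi, Set.mem_univ, true_implies, Set.mem_iInter,
        hS, Finset.mem_image, Finset.mem_univ, true_and]
      constructor
      · rintro h q ⟨i, rfl⟩
        rw [hTval, hWY]
        exact h i
      · intro h i
        have hh := h (emb (k, i)) ⟨i, rfl⟩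
        rwa [hTval, hWY] at hh
    have hmeasT : ∀ q ∈ S, MeasurableSet[MeasurableSpace.comap (Y q) inferInstance]
        (Y q ⁻¹' T q) := by
      intro q hq
      refine ⟨T q, ?_, rfl⟩
      simp only [hS, Finset.mem_image, Finset.mem_univ, true_and] at hq
      obtain ⟨i, rfl⟩ := hq
      rw [hTval]
      exact ht i
    have := hiid.meas_biInter (S := S) (s := fun q => Y q ⁻¹' T q) hmeasT
    rw [hinter, this]
    have hembinj : Function.Injective fun i : Fin n => emb (k, i) := by
      intro i j hij
      have h2 : ((k, i) : ℕ × Fin n) = (k, j) := hinj hij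
      exact congrArg Prod.snd h2
    rw [hS, Finset.prod_image (fun i _ j _ h => hembinj h)]
    refine Finset.prod_congr rfl fun i _ => ?_
    rw [← Measure.map_apply (hYmeas _) (by rw [hTval]; exact ht i), hunif, hTval]
  have harrX : ∀ k, Measure.map (X k) P = μn :=
    harr X Sum.inl Sum.inl_injective (fun p ω => rfl) hXmeas
  have harrX' : ∀ k, Measure.map (X' k) P = μn :=
    harr X' Sum.inr Sum.inr_injective (fun p ω => rfl) hX'meas
  -- each chain at time k is a measurable function of the rows used so far
  have hFMC : ∀ k, ∃ F : ((Fin k × Fin n) → (Fin s → ℝ)) → (Fin n → Fin d → ℝ),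
      Measurable F ∧ ∀ ω, ZMC k ω = F (fun p => X (p.1.val + 1) ω p.2) := by
    intro k
    induction k with
    | zero => exact ⟨fun _ => Z0, measurable_const, fun ω => hMC0 ω⟩
    | succ k ih =>
      obtain ⟨F, hFm, hF⟩ := ih
      have hres : Measurable fun (x : (Fin (k + 1) × Fin n) → (Fin s → ℝ))
          (p : Fin k × Fin n) => x (p.1.castSucc, p.2) :=
        measurable_pi_lambda _ fun p => measurable_pi_apply _
      refine ⟨fun x i => φ (F (fun p => x (p.1.castSucc, p.2)) i, x (Fin.last k, i)),
        ?_, ?_⟩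
      · refine measurable_pi_lambda _ fun i => hφ.comp (Measurable.prodMk ?_ ?_)
        · exact (measurable_pi_apply i).comp (hFm.comp hres)
        · exact measurable_pi_apply _
      · intro ω
        funext i
        rw [hMC k ω i, hF ω]
        simp [Fin.val_last]
  have hFAMC : ∀ k, ∃ F : ((Fin k × Fin n) → (Fin s → ℝ)) → (Fin n → Fin d → ℝ),
      Measurable F ∧ ∀ ω, ZAMC k ω = F (fun p => X' (p.1.val + 1) ω p.2) := by
    intro k
    induction k with
    | zero => exact ⟨fun _ => Z0, measurable_const, fun ω => hAMC0 ω⟩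
    | succ k ih =>
      obtain ⟨F, hFm, hF⟩ := ih
      have hres : Measurable fun (x : (Fin (k + 1) × Fin n) → (Fin s → ℝ))
          (p : Fin k × Fin n) => x (p.1.castSucc, p.2) :=
        measurable_pi_lambda _ fun p => measurable_pi_apply _
      refine ⟨fun x i => φ (F (fun p => x (p.1.castSucc, p.2)) i,
        x (Fin.last k, π (F (fun p => x (p.1.castSucc, p.2))) i)), ?_, ?_⟩
      · refine measurable_pi_lambda _ fun i => hφ.comp (Measurable.prodMk ?_ ?_)
        · exact (measurable_pi_apply i).comp (hFm.comp hres)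
        · exact aux_meas_perm_eval (h := fun (x : (Fin (k + 1) × Fin n) → (Fin s → ℝ))
              (j : Fin n) => x (Fin.last k, j)) π hπ (hFm.comp hres)
            (measurable_pi_lambda _ fun j => measurable_pi_apply (Fin.last k, j)) i
      · intro ω
        funext i
        rw [hAMC k ω i, hF ω]
        simp [Fin.val_last]
  have hZMCmeas : ∀ k, Measurable (ZMC k) := by
    intro k
    obtain ⟨F, hFm, hF⟩ := hFMC k
    have : ZMC k = F ∘ fun ω (p : Fin k × Fin n) => X (p.1.val + 1) ω p.2 := funext hF
    rw [this]
    exact hFm.comp (measurable_pi_lambda _ fun p =>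
      (measurable_pi_apply p.2).comp (hXmeas _))
  have hZAMCmeas : ∀ k, Measurable (ZAMC k) := by
    intro k
    obtain ⟨F, hFm, hF⟩ := hFAMC k
    have : ZAMC k = F ∘ fun ω (p : Fin k × Fin n) => X' (p.1.val + 1) ω p.2 := funext hF
    rw [this]
    exact hFm.comp (measurable_pi_lambda _ fun p =>
      (measurable_pi_apply p.2).comp (hX'meas _))
  -- independence of the chain at time k from the next array
  have hindep : ∀ (W : ℕ → Ω → Fin n → Fin s → ℝ)
      (emb : ℕ × Fin n → (ℕ × Fin n) ⊕ (ℕ × Fin n)),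
      Function.Injective emb → (∀ p ω, Y (emb p) ω = W p.1 ω p.2) →
      ∀ (k : ℕ) (Z : Ω → Fin n → Fin d → ℝ)
        (F : ((Fin k × Fin n) → (Fin s → ℝ)) → (Fin n → Fin d → ℝ)),
        Measurable F → (∀ ω, Z ω = F (fun p => W (p.1.val + 1) ω p.2)) →
        IndepFun Z (W (k + 1)) P := by
    intro W emb hinj hWY k Z F hFm hF
    set S : Finset ((ℕ × Fin n) ⊕ (ℕ × Fin n)) :=
      Finset.image (fun p : Fin k × Fin n => emb (p.1.val + 1, p.2)) Finset.univ with hS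
    set T : Finset ((ℕ × Fin n) ⊕ (ℕ × Fin n)) :=
      Finset.image (fun i : Fin n => emb (k + 1, i)) Finset.univ with hT
    have hST : Disjoint S T := by
      rw [Finset.disjoint_left]
      intro q hqS hqT
      simp only [hS, hT, Finset.mem_image, Finset.mem_univ, true_and] at hqS hqT
      obtain ⟨p, rfl⟩ := hqS
      obtain ⟨i, hi⟩ := hqT
      have := hinj hi.symm
      have h1 : p.1.val + 1 = k + 1 := congrArg Prod.fst this
      have h2 := p.1.isLt
      omega
    have hbase := hiid.indepFun_finset S T hST hYmeas
    have hZeq : Z = (fun g : S → (Fin s → ℝ) => F fun p : Fin k × Fin n =>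
        g ⟨emb (p.1.val + 1, p.2), by
          simp only [hS, Finset.mem_image, Finset.mem_univ, true_and]
          exact ⟨p, rfl⟩⟩) ∘ fun ω (q : S) => Y q ω := by
      funext ω
      have harg : (fun p : Fin k × Fin n => W (p.1.val + 1) ω p.2)
          = fun p : Fin k × Fin n => Y (emb (p.1.val + 1, p.2)) ω := by
        funext p
        exact (hWY (p.1.val + 1, p.2) ω).symm
      rw [hF ω, harg]
      rfl
    have hWeq : W (k + 1) = (fun g : T → (Fin s → ℝ) => fun i : Fin n =>
        g ⟨emb (k + 1, i), by
          simp only [hT, Finset.mem_image, Finset.mem_univ, true_and]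
          exact ⟨i, rfl⟩⟩) ∘ fun ω (q : T) => Y q ω := by
      funext ω
      simp only [Function.comp_apply]
      funext i
      exact (hWY (k + 1, i) ω).symm
    rw [hZeq, hWeq]
    exact hbase.comp
      (hFm.comp (measurable_pi_lambda _ fun p => measurable_pi_apply _))
      (measurable_pi_lambda _ fun i => measurable_pi_apply _)
  have hindepMC : ∀ k, IndepFun (ZMC k) (X (k + 1)) P := by
    intro k
    obtain ⟨F, hFm, hF⟩ := hFMC k
    exact hindep X Sum.inl Sum.inl_injective (fun p ω => rfl) k (ZMC k) F hFm hF
  have hindepAMC : ∀ k, IndepFun (ZAMC k) (X' (k + 1)) P := by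
    intro k
    obtain ⟨F, hFm, hF⟩ := hFAMC k
    exact hindep X' Sum.inr Sum.inr_injective (fun p ω => rfl) k (ZAMC k) F hFm hF
  -- the row-by-row update map
  set Φm : (Fin n → Fin d → ℝ) × (Fin n → Fin s → ℝ) → (Fin n → Fin d → ℝ) :=
    fun p i => φ (p.1 i, p.2 i) with hΦm
  have hΦmeas : Measurable Φm := by
    refine measurable_pi_lambda _ fun i => hφ.comp (Measurable.prodMk ?_ ?_)
    · exact (measurable_pi_apply i).comp measurable_fst
    · exact (measurable_pi_apply i).comp measurable_snd
  -- main induction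
  intro k
  induction k with
  | zero =>
    have : ZMC 0 = ZAMC 0 := by
      funext ω
      rw [hMC0 ω, hAMC0 ω]
    rw [this]
  | succ k ih =>
    -- MC step
    have hpairMC : Measurable fun ω => (ZMC k ω, X (k + 1) ω) :=
      (hZMCmeas k).prodMk (hXmeas (k + 1))
    have eMC : ZMC (k + 1) = Φm ∘ fun ω => (ZMC k ω, X (k + 1) ω) := by
      funext ω
      funext i
      exact hMC k ω i
    have lawMC : Measure.map (fun ω => (ZMC k ω, X (k + 1) ω)) P
        = (Measure.map (ZMC k) P).prod μn := by
      rw [(indepFun_iff_map_prod_eq_prod_map_map (hZMCmeas k).aemeasurable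
        (hXmeas (k + 1)).aemeasurable).mp (hindepMC k), harrX]
    -- AMC step
    have lawAMC : Measure.map (fun ω => (ZAMC k ω, fun i => X' (k + 1) ω (π (ZAMC k ω) i))) P
        = (Measure.map (ZAMC k) P).prod μn := by
      refine aux_pair_perm_law P π hπ (hZAMCmeas k) (hX'meas (k + 1)) μn
        (harrX' (k + 1)) (fun σ => ?_) (hindepAMC k)
      rw [hμn]
      exact aux_perm_pi_map μ1 σ
    have hpairAMC : Measurable fun ω =>
        (ZAMC k ω, fun i => X' (k + 1) ω (π (ZAMC k ω) i)) :=
      (hZAMCmeas k).prodMk (measurable_pi_lambda _ fun i =>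
        aux_meas_perm_eval π hπ (hZAMCmeas k) (hX'meas (k + 1)) i)
    have eAMC : ZAMC (k + 1) = Φm ∘ fun ω =>
        (ZAMC k ω, fun i => X' (k + 1) ω (π (ZAMC k ω) i)) := by
      funext ω
      funext i
      exact hAMC k ω i
    rw [eMC, eAMC, ← Measure.map_map hΦmeas hpairMC, ← Measure.map_map hΦmeas hpairAMC,
      lawMC, lawAMC, ih]
end

section
/- Let f ∈ L²([0,1]^d) with ANOVA variance components σ_u², and fix j ∈ {1,…,d}. For x ∈ [0,1]^d and z_j ∈ [0,1], let x_{−j}:z_j denote the point obtained from x by replacing its j-th coordinate with z_j. Then the total Sobol' index of coordinate j satisfies Jansen's identity: ∑_{u : j ∈ u} σ_u² = (1/2) ∫_{[0,1]^d} ∫_0^1 ( f(x) − f(x_{−j}:z_j) )² dz_j dx. -/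
open MeasureTheory

/-- The uniform probability measure on the cube `[0,1]^d`. -/
noncomputable def cubeMeasure (d : ℕ) : Measure (Fin d → ℝ) :=
  Measure.pi fun _ => volume.restrict (Set.Icc (0 : ℝ) 1)

/-- The ANOVA (Sobol'–Hoeffding) effect `f_u` of `f : [0,1]^d → ℝ`, defined
recursively by `f_u(x) = ∫ f(x) dx_{−u} − ∑_{v ⊊ u} f_v(x)`: the integral of `f`
over the coordinates outside `u` (the coordinates in `u` being frozen at `x`),
minus the effects of all proper subsets.  In particular `f_∅ ≡ ∫ f`. -/
noncomputable def anova {d : ℕ} (f : (Fin d → ℝ) → ℝ) (u : Finset (Fin d))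
    (x : Fin d → ℝ) : ℝ :=
  (∫ y, f (fun i => if i ∈ u then x i else y i) ∂cubeMeasure d) -
    ∑ v ∈ u.ssubsets.attach, anova f v.1 x
termination_by u.card
decreasing_by
  exact Finset.card_lt_card (Finset.mem_ssubsets.mp v.2)

namespace Jansen

/-- The uniform probability measure on `[0,1]`. -/
noncomputable def unif : Measure ℝ := volume.restrict (Set.Icc (0 : ℝ) 1)

instance : IsProbabilityMeasure unif :=
  ⟨by simp [unif, Real.volume_Icc]⟩

lemma cubeMeasure_eq (d : ℕ) : cubeMeasure d = Measure.pi (fun _ : Fin d => unif) := rfl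

instance (d : ℕ) : IsProbabilityMeasure (cubeMeasure d) := by
  rw [cubeMeasure_eq]; infer_instance

variable {d : ℕ}

/-- Freeze the coordinates in `u` from the first argument, take the rest from the second. -/
def piece (u : Finset (Fin d)) (p : (Fin d → ℝ) × (Fin d → ℝ)) : Fin d → ℝ :=
  fun i => if i ∈ u then p.1 i else p.2 i

/-- Replace coordinate `j`. -/
def updMap (j : Fin d) (p : (Fin d → ℝ) × ℝ) : Fin d → ℝ :=
  Function.update p.1 j p.2

/-- Integrate out the coordinates outside `u`. -/
noncomputable def pintF (f : (Fin d → ℝ) → ℝ) (u : Finset (Fin d)) (x : Fin d → ℝ) : ℝ :=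
  ∫ y, f (fun i => if i ∈ u then x i else y i) ∂cubeMeasure d

lemma anova_eq (f : (Fin d → ℝ) → ℝ) (u : Finset (Fin d)) (x : Fin d → ℝ) :
    anova f u x = pintF f u x - ∑ v ∈ u.ssubsets, anova f v x := by
  rw [anova, Finset.sum_attach u.ssubsets (fun v => anova f v x)]; rfl

lemma sum_powerset (f : (Fin d → ℝ) → ℝ) (u : Finset (Fin d)) (x : Fin d → ℝ) :
    ∑ v ∈ u.powerset, anova f v x = pintF f u x := by
  have h1 : u ∈ u.powerset := Finset.mem_powerset_self u
  have h2 : u.ssubsets = u.powerset.erase u := rfl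
  have := Finset.sum_erase_add u.powerset (fun v => anova f v x) h1
  rw [← this, ← h2, anova_eq f u x]
  ring

lemma pintF_congr {f : (Fin d → ℝ) → ℝ} {u : Finset (Fin d)} {x x' : Fin d → ℝ}
    (h : ∀ i ∈ u, x i = x' i) : pintF f u x = pintF f u x' := by
  unfold pintF
  congr 1
  funext y
  congr 1
  funext i
  by_cases hi : i ∈ u <;> simp [hi, h i]

lemma anova_congr {f : (Fin d → ℝ) → ℝ} {u : Finset (Fin d)} {x x' : Fin d → ℝ}
    (h : ∀ i ∈ u, x i = x' i) : anova f u x = anova f u x' := by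
  induction u using Finset.strongInduction with
  | _ u ih =>
    rw [anova_eq, anova_eq, pintF_congr h]
    congr 1
    refine Finset.sum_congr rfl fun v hv => ?_
    have hvu := Finset.mem_ssubsets.mp hv
    exact ih v hvu fun i hi => h i (hvu.subset hi)

lemma measurable_piece (u : Finset (Fin d)) : Measurable (piece u) := by
  apply measurable_pi_lambda
  intro i
  by_cases h : i ∈ u
  · simp only [piece, h, ↓reduceIte]; exact (measurable_pi_apply i).comp measurable_fst
  · simp only [piece, h, ↓reduceIte]; exact (measurable_pi_apply i).comp measurable_snd

lemma measurable_updMap (j : Fin d) : Measurable (updMap j) := by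
  apply measurable_pi_lambda
  intro i
  by_cases h : i = j
  · subst h; simpa [updMap] using measurable_snd
  · simp only [updMap, Function.update_apply, if_neg h]
    exact (measurable_pi_apply i).comp measurable_fst

lemma mp_piece (u : Finset (Fin d)) :
    MeasurePreserving (piece u) ((cubeMeasure d).prod (cubeMeasure d)) (cubeMeasure d) := by
  refine ⟨measurable_piece u, ?_⟩
  rw [cubeMeasure_eq]
  refine (Measure.pi_eq fun s hs => ?_).symm
  rw [Measure.map_apply (measurable_piece u) (MeasurableSet.univ_pi hs)]
  have hpre : piece u ⁻¹' Set.pi Set.univ s =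
      (Set.pi Set.univ fun i => if i ∈ u then s i else Set.univ) ×ˢ
        (Set.pi Set.univ fun i => if i ∈ u then Set.univ else s i) := by
    ext ⟨x, y⟩
    simp only [Set.mem_preimage, Set.mem_pi, Set.mem_univ, true_implies, Set.mem_prod, piece]
    constructor
    · intro h
      constructor <;> intro i <;> by_cases hi : i ∈ u <;> simp only [hi, if_true, if_false] <;>
        first | exact Set.mem_univ _ | simpa [hi] using h i
    · rintro ⟨h1, h2⟩ i
      by_cases hi : i ∈ u
      · simpa [hi] using h1 i
      · simpa [hi] using h2 i
  rw [hpre, ← cubeMeasure_eq, Measure.prod_prod, cubeMeasure_eq, Measure.pi_pi, Measure.pi_pi,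
    ← Finset.prod_mul_distrib]
  refine Finset.prod_congr rfl fun i _ => ?_
  by_cases hi : i ∈ u <;> simp [hi]

lemma mp_updMap (j : Fin d) :
    MeasurePreserving (updMap j) ((cubeMeasure d).prod unif) (cubeMeasure d) := by
  refine ⟨measurable_updMap j, ?_⟩
  rw [cubeMeasure_eq]
  refine (Measure.pi_eq fun s hs => ?_).symm
  rw [Measure.map_apply (measurable_updMap j) (MeasurableSet.univ_pi hs)]
  have hpre : updMap j ⁻¹' Set.pi Set.univ s =
      (Set.pi Set.univ fun i => if i = j then Set.univ else s i) ×ˢ s j := by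
    ext ⟨x, z⟩
    simp only [Set.mem_preimage, Set.mem_pi, Set.mem_univ, true_implies, Set.mem_prod, updMap]
    constructor
    · intro h
      refine ⟨fun i => ?_, by simpa using h j⟩
      by_cases hi : i = j
      · simp [hi]
      · simpa [hi, Function.update_of_ne hi] using h i
    · rintro ⟨h1, h2⟩ i
      by_cases hi : i = j
      · subst hi; simpa using h2
      · simpa [hi, Function.update_of_ne hi] using h1 i
  rw [hpre, ← cubeMeasure_eq, Measure.prod_prod, cubeMeasure_eq, Measure.pi_pi]
  have h1 : ∀ i : Fin d, (if i = j then Set.univ else s i) = Set.univ ∨ i ≠ j := by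
    intro i; by_cases hi : i = j <;> simp [hi]
  calc (∏ i, unif (if i = j then Set.univ else s i)) * unif (s j)
      = (∏ i ∈ Finset.univ.erase j, unif (s i)) * unif (s j) := by
        congr 1
        rw [← Finset.prod_erase_mul Finset.univ
          (fun i => unif (if i = j then Set.univ else s i)) (Finset.mem_univ j)]
        rw [if_pos rfl, measure_univ, mul_one]
        exact Finset.prod_congr rfl fun i hi => by
          rw [if_neg (Finset.mem_erase.mp hi).1]
    _ = ∏ i, unif (s i) := Finset.prod_erase_mul Finset.univ _ (Finset.mem_univ j)

lemma mp_fst {α : Type*} [MeasurableSpace α] {μ : Measure α} {ν : Measure ℝ}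
    [IsProbabilityMeasure ν] [SFinite μ] :
    MeasurePreserving (Prod.fst : α × ℝ → α) (μ.prod ν) μ := by
  refine ⟨measurable_fst, ?_⟩
  rw [Measure.map_fst_prod]
  simp

lemma integral_comp_mp {α β : Type*} [MeasurableSpace α] [MeasurableSpace β]
    {μ : Measure α} {ν : Measure β} {T : α → β} (hT : MeasurePreserving T μ ν)
    {h : β → ℝ} (hh : AEStronglyMeasurable h ν) :
    ∫ a, h (T a) ∂μ = ∫ b, h b ∂ν := by
  rw [← hT.map_eq] at hh ⊢
  exact (integral_map hT.measurable.aemeasurable hh).symm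

/-- Cauchy–Schwarz / Jensen: for a probability measure, `(∫ g)² ≤ ∫ g²`. -/
lemma sq_integral_le {α : Type*} [MeasurableSpace α] {ν : Measure α} [IsProbabilityMeasure ν]
    {g : α → ℝ} (h1 : Integrable g ν) (h2 : Integrable (fun y => g y ^ 2) ν) :
    (∫ y, g y ∂ν) ^ 2 ≤ ∫ y, g y ^ 2 ∂ν := by
  set c := ∫ y, g y ∂ν with hc
  have h0 : 0 ≤ ∫ y, (g y - c) ^ 2 ∂ν := integral_nonneg fun y => sq_nonneg _
  have hexp : ∫ y, (g y - c) ^ 2 ∂ν = ∫ y, g y ^ 2 ∂ν - 2 * c * c + c ^ 2 := by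
    have h3 : ∀ y, (g y - c) ^ 2 = g y ^ 2 - (2 * c) * g y + c ^ 2 := fun y => by ring
    simp_rw [h3]
    have ha : Integrable (fun y => g y ^ 2 - 2 * c * g y) ν := h2.sub (h1.const_mul (2 * c))
    have hb : Integrable (fun _ : α => c ^ 2) ν := integrable_const _
    rw [integral_add ha hb, integral_sub h2 (h1.const_mul (2 * c)), integral_const_mul,
      integral_const]
    simp only [probReal_univ, measure_univ, ENNReal.toReal_one, one_smul, smul_eq_mul]
    rw [← hc]
    ring
  nlinarith

lemma memL2_mul_integrable {α : Type*} [MeasurableSpace α] {μ : Measure α} {g h : α → ℝ}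
    (hg : MemLp g 2 μ) (hh : MemLp h 2 μ) : Integrable (fun x => g x * h x) μ := by
  have hb : Integrable (fun x => (g x ^ 2 + h x ^ 2) / 2) μ :=
    (hg.integrable_sq.add hh.integrable_sq).div_const 2
  refine hb.mono' (hg.1.mul hh.1) ?_
  filter_upwards with x
  rw [Real.norm_eq_abs, abs_mul]
  have h1 : |g x| * |h x| ≤ (g x ^ 2 + h x ^ 2) / 2 := by
    nlinarith [sq_abs (g x), sq_abs (h x), sq_nonneg (|g x| - |h x|), abs_nonneg (g x), abs_nonneg (h x)]
  exact h1

section SM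

variable {f : (Fin d → ℝ) → ℝ} (hsm : StronglyMeasurable f)
  (hf : MemLp f 2 (cubeMeasure d))

include hsm

lemma sm_pintF (u : Finset (Fin d)) : StronglyMeasurable (pintF f u) := by
  have hF : StronglyMeasurable (fun p : (Fin d → ℝ) × (Fin d → ℝ) => f (piece u p)) :=
    hsm.comp_measurable (measurable_piece u)
  exact hF.integral_prod_right' 

lemma sm_anova (u : Finset (Fin d)) : StronglyMeasurable (anova f u) := by
  induction u using Finset.strongInduction with
  | _ u ih =>
    have he : anova f u = fun x => pintF f u x - ∑ v ∈ u.ssubsets, anova f v x :=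
      funext fun x => anova_eq f u x
    rw [he]
    exact (sm_pintF hsm u).sub
      (Finset.stronglyMeasurable_fun_sum u.ssubsets
        fun v hv => ih v (Finset.mem_ssubsets.mp hv))

include hf

lemma memL2_pintF (u : Finset (Fin d)) : MemLp (pintF f u) 2 (cubeMeasure d) := by
  have hF : MemLp (fun p => f (piece u p)) 2 ((cubeMeasure d).prod (cubeMeasure d)) :=
    hf.comp_measurePreserving (mp_piece u)
  have hFsq : Integrable (fun p => f (piece u p) ^ 2) ((cubeMeasure d).prod (cubeMeasure d)) :=
    hF.integrable_sq
  have hFi : Integrable (fun p => f (piece u p)) ((cubeMeasure d).prod (cubeMeasure d)) :=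
    hF.integrable one_le_two
  rw [memLp_two_iff_integrable_sq (sm_pintF hsm u).aestronglyMeasurable]
  have hIb : Integrable (fun x => ∫ y, f (piece u (x, y)) ^ 2 ∂cubeMeasure d)
      (cubeMeasure d) := hFsq.integral_prod_left
  refine hIb.mono' ((sm_pintF hsm u).pow 2).aestronglyMeasurable ?_
  filter_upwards [hFi.prod_right_ae, hFsq.prod_right_ae] with x h1 h2
  have hle : (pintF f u x) ^ 2 ≤ ∫ y, f (piece u (x, y)) ^ 2 ∂cubeMeasure d :=
    sq_integral_le h1 h2
  rw [Real.norm_eq_abs, abs_of_nonneg (sq_nonneg _)]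
  exact hle

lemma memL2_anova (u : Finset (Fin d)) : MemLp (anova f u) 2 (cubeMeasure d) := by
  induction u using Finset.strongInduction with
  | _ u ih =>
    have he : anova f u = fun x => pintF f u x - ∑ v ∈ u.ssubsets, anova f v x :=
      funext fun x => anova_eq f u x
    rw [he]
    refine (memL2_pintF hsm hf u).sub
      ((memLp_finset_sum' u.ssubsets fun v hv => ih v (Finset.mem_ssubsets.mp hv)).ae_eq ?_)
    filter_upwards with x
    simp [Finset.sum_apply]

end SM

lemma slice_integrable {g : (Fin d → ℝ) → ℝ} (hg : Integrable g (cubeMeasure d)) (j : Fin d) :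
    ∀ᵐ x ∂cubeMeasure d, Integrable (fun z => g (Function.update x j z)) unif := by
  have h1 : Integrable (fun p : (Fin d → ℝ) × ℝ => g (updMap j p))
      ((cubeMeasure d).prod unif) :=
    ((mp_updMap j).integrable_comp hg.1).mpr hg
  exact h1.prod_right_ae

section Key

variable {f : (Fin d → ℝ) → ℝ} (hsm : StronglyMeasurable f)
  (hf : MemLp f 2 (cubeMeasure d))

include hsm hf

lemma pintF_update_int (u : Finset (Fin d)) (j : Fin d) (hj : j ∈ u) :
    ∀ᵐ x ∂cubeMeasure d,
      Integrable (fun z => pintF f u (Function.update x j z)) unif ∧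
      ∫ z, pintF f u (Function.update x j z) ∂unif = pintF f (u.erase j) x := by
  have hFsm : StronglyMeasurable (fun q : (Fin d → ℝ) × (Fin d → ℝ) => f (piece (u.erase j) q)) :=
    hsm.comp_measurable (measurable_piece _)
  have hFint : Integrable (fun q => f (piece (u.erase j) q))
      ((cubeMeasure d).prod (cubeMeasure d)) :=
    ((mp_piece (u.erase j)).integrable_comp hf.1).mpr (hf.integrable one_le_two)
  filter_upwards [hFint.prod_right_ae] with x hx
  have hhsm : StronglyMeasurable (fun y => f (piece (u.erase j) (x, y))) :=
    hsm.comp_measurable ((measurable_piece _).comp (measurable_const.prodMk measurable_id))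
  have key : ∀ (y : Fin d → ℝ) (z : ℝ),
      f (piece (u.erase j) (x, updMap j (y, z)))
        = f (fun i => if i ∈ u then Function.update x j z i else y i) := by
    intro y z
    congr 1
    funext i
    by_cases hi : i = j
    · subst hi; simp [piece, updMap, Finset.mem_erase, hj]
    · by_cases hiu : i ∈ u <;>
        simp [piece, updMap, Finset.mem_erase, hi, hiu, Function.update_of_ne hi]
  have hcomp : Integrable
      (fun p : (Fin d → ℝ) × ℝ => f (piece (u.erase j) (x, updMap j p)))
      ((cubeMeasure d).prod unif) :=
    ((mp_updMap j).integrable_comp hhsm.aestronglyMeasurable).mpr hx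
  have heq0 : pintF f (u.erase j) x
      = ∫ p, f (piece (u.erase j) (x, updMap j p)) ∂((cubeMeasure d).prod unif) :=
    (integral_comp_mp (mp_updMap j) hhsm.aestronglyMeasurable).symm
  have hswap : ∀ z : ℝ, (∫ y, f (piece (u.erase j) (x, updMap j (y, z))) ∂cubeMeasure d)
      = pintF f u (Function.update x j z) := by
    intro z
    unfold pintF
    exact integral_congr_ae (Filter.Eventually.of_forall fun y => key y z)
  constructor
  · have h2 : Integrable
        (fun z => ∫ y, f (piece (u.erase j) (x, updMap j (y, z))) ∂cubeMeasure d) unif :=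
      hcomp.integral_prod_right
    exact h2.congr (Filter.Eventually.of_forall fun z => hswap z)
  · rw [← funext hswap]
    rw [heq0, integral_prod_symm _ hcomp]

lemma anova_update_integral_zero (u : Finset (Fin d)) :
    ∀ j ∈ u, ∀ᵐ x ∂cubeMeasure d,
      ∫ z, anova f u (Function.update x j z) ∂unif = 0 := by
  induction u using Finset.strongInduction with
  | _ u ih =>
    intro j hj
    have hset : u.ssubsets.filter (fun v => j ∉ v) = (u.erase j).powerset := by
      ext v
      simp only [Finset.mem_filter, Finset.mem_ssubsets, Finset.mem_powerset, Finset.subset_erase]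
      constructor
      · rintro ⟨h1, h2⟩; exact ⟨h1.subset, h2⟩
      · rintro ⟨h1, h2⟩
        refine ⟨lt_of_le_of_ne h1 ?_, h2⟩
        rintro rfl; exact h2 hj
    have hA : ∀ᵐ x ∂cubeMeasure d, ∀ v ∈ u.ssubsets,
        Integrable (fun z => anova f v (Function.update x j z)) unif :=
      (ae_ball_iff u.ssubsets.countable_toSet).mpr fun v _ =>
        slice_integrable ((memL2_anova hsm hf v).integrable one_le_two) j
    have hB : ∀ᵐ x ∂cubeMeasure d, ∀ v ∈ u.ssubsets, j ∈ v →
        ∫ z, anova f v (Function.update x j z) ∂unif = 0 := by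
      refine (ae_ball_iff u.ssubsets.countable_toSet).mpr fun v hv => ?_
      by_cases hjv : j ∈ v
      · exact (ih v (Finset.mem_ssubsets.mp hv) j hjv).mono fun x h _ => h
      · filter_upwards with x h; exact absurd h hjv
    filter_upwards [pintF_update_int hsm hf u j hj, hA, hB] with x hx1 hxA hxB
    have hsum : ∀ z, anova f u (Function.update x j z) =
        pintF f u (Function.update x j z)
          - ∑ v ∈ u.ssubsets, anova f v (Function.update x j z) :=
      fun z => anova_eq f u _
    have hIsum : Integrable
        (fun z => ∑ v ∈ u.ssubsets, anova f v (Function.update x j z)) unif :=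
      integrable_finset_sum _ fun v hv => hxA v hv
    calc ∫ z, anova f u (Function.update x j z) ∂unif
        = ∫ z, (pintF f u (Function.update x j z)
            - ∑ v ∈ u.ssubsets, anova f v (Function.update x j z)) ∂unif := by
          simp_rw [hsum]
      _ = (∫ z, pintF f u (Function.update x j z) ∂unif)
            - ∫ z, ∑ v ∈ u.ssubsets, anova f v (Function.update x j z) ∂unif :=
          integral_sub hx1.1 hIsum
      _ = pintF f (u.erase j) x
            - ∑ v ∈ u.ssubsets, ∫ z, anova f v (Function.update x j z) ∂unif := by
          rw [hx1.2, integral_finset_sum _ fun v hv => hxA v hv]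
      _ = pintF f (u.erase j) x
            - ∑ v ∈ u.ssubsets, (if j ∉ v then anova f v x else 0) := by
          congr 1
          refine Finset.sum_congr rfl fun v hv => ?_
          by_cases hjv : j ∈ v
          · rw [if_neg (by simp [hjv]), hxB v hv hjv]
          · rw [if_pos hjv]
            have hconst : ∀ z : ℝ, anova f v (Function.update x j z) = anova f v x :=
              fun z => anova_congr fun i hi =>
                Function.update_of_ne (by rintro rfl; exact hjv hi) _ _
            simp_rw [hconst]
            simp
      _ = pintF f (u.erase j) x
            - ∑ v ∈ u.ssubsets.filter (fun v => j ∉ v), anova f v x := by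
          rw [Finset.sum_filter]
      _ = pintF f (u.erase j) x - ∑ v ∈ (u.erase j).powerset, anova f v x := by rw [hset]
      _ = 0 := by rw [sum_powerset]; ring

lemma orth_aux {u v : Finset (Fin d)} {k : Fin d} (hk : k ∈ u) (hk' : k ∉ v) :
    ∫ x, anova f u x * anova f v x ∂cubeMeasure d = 0 := by
  have hAsm := sm_anova hsm u
  have hBsm := sm_anova hsm v
  have hI : Integrable (fun x => anova f u x * anova f v x) (cubeMeasure d) :=
    memL2_mul_integrable (memL2_anova hsm hf u) (memL2_anova hsm hf v)
  have hprod : Integrable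
      (fun p : (Fin d → ℝ) × ℝ => anova f u (updMap k p) * anova f v (updMap k p))
      ((cubeMeasure d).prod unif) :=
    ((mp_updMap k).integrable_comp (hAsm.mul hBsm).aestronglyMeasurable).mpr hI
  have h1 : ∫ x, anova f u x * anova f v x ∂cubeMeasure d
      = ∫ p, anova f u (updMap k p) * anova f v (updMap k p) ∂((cubeMeasure d).prod unif) :=
    (integral_comp_mp (mp_updMap k) (hAsm.mul hBsm).aestronglyMeasurable).symm
  rw [h1, integral_prod _ hprod]
  have hz := anova_update_integral_zero hsm hf u k hk
  have hae : ∀ᵐ x ∂cubeMeasure d,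
      ∫ z, anova f u (updMap k (x, z)) * anova f v (updMap k (x, z)) ∂unif = 0 := by
    filter_upwards [hz] with x hx
    have hBc : ∀ z : ℝ, anova f v (updMap k (x, z)) = anova f v x := fun z =>
      anova_congr fun i hi => Function.update_of_ne (by rintro rfl; exact hk' hi) _ _
    calc ∫ z, anova f u (updMap k (x, z)) * anova f v (updMap k (x, z)) ∂unif
        = ∫ z, anova f u (Function.update x k z) * anova f v x ∂unif := by
          simp_rw [hBc]; rfl
      _ = (∫ z, anova f u (Function.update x k z) ∂unif) * anova f v x :=
          integral_mul_const _ _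
      _ = 0 := by rw [hx, zero_mul]
  rw [integral_congr_ae hae, integral_zero]

lemma orth {u v : Finset (Fin d)} (huv : u ≠ v) :
    ∫ x, anova f u x * anova f v x ∂cubeMeasure d = 0 := by
  by_cases hsub : u ⊆ v
  · have hns : ¬ v ⊆ u := fun h => huv (Finset.Subset.antisymm hsub h)
    obtain ⟨k, hk, hk'⟩ := Finset.not_subset.mp hns
    calc ∫ x, anova f u x * anova f v x ∂cubeMeasure d
        = ∫ x, anova f v x * anova f u x ∂cubeMeasure d := by simp_rw [mul_comm]
      _ = 0 := orth_aux hsm hf hk hk'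
  · obtain ⟨k, hk, hk'⟩ := Finset.not_subset.mp hsub
    exact orth_aux hsm hf hk hk' 

lemma main_sm (j : Fin d) :
    ∑ u ∈ Finset.univ.filter (fun u : Finset (Fin d) => j ∈ u),
        ∫ x, (anova f u x) ^ 2 ∂cubeMeasure d
      = (1 / 2) *
          ∫ x, (∫ z in Set.Icc (0 : ℝ) 1, (f x - f (Function.update x j z)) ^ 2)
            ∂cubeMeasure d := by
  classical
  set S : Finset (Finset (Fin d)) := Finset.univ.filter (fun u : Finset (Fin d) => j ∈ u) with hS
  set g : (Fin d → ℝ) → ℝ := fun x => ∑ u ∈ S, anova f u x with hg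
  have hgsm : StronglyMeasurable g :=
    Finset.stronglyMeasurable_fun_sum S fun u _ => sm_anova hsm u
  have hg2 : MemLp g 2 (cubeMeasure d) := by
    refine (memLp_finset_sum' S fun u (_ : u ∈ S) => memL2_anova hsm hf u).ae_eq ?_
    filter_upwards with x
    simp [hg, Finset.sum_apply]
  -- pointwise decomposition f = g + (integrated part not containing j)
  have hsplitset : Finset.univ.filter (fun u : Finset (Fin d) => ¬ j ∈ u)
      = ((Finset.univ : Finset (Fin d)).erase j).powerset := by
    ext v
    simp [Finset.mem_powerset, Finset.subset_erase]
  have hdecomp : ∀ x, f x = g x + pintF f ((Finset.univ : Finset (Fin d)).erase j) x := by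
    intro x
    have h1 : ∑ u ∈ (Finset.univ : Finset (Finset (Fin d))), anova f u x = f x := by
      rw [← Finset.powerset_univ, sum_powerset]
      unfold pintF
      have h2 : (fun y : Fin d → ℝ => f fun i => if i ∈ Finset.univ then x i else y i)
          = fun _ => f x := by
        funext y; congr 1; funext i; simp
      rw [h2, integral_const]
      simp
    rw [← h1, ← Finset.sum_filter_add_sum_filter_not Finset.univ
      (fun u => j ∈ u) (fun u => anova f u x), hsplitset, sum_powerset]
  have hinv : ∀ (x : Fin d → ℝ) (z : ℝ),
      pintF f ((Finset.univ : Finset (Fin d)).erase j) (Function.update x j z)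
        = pintF f ((Finset.univ : Finset (Fin d)).erase j) x := fun x z =>
    pintF_congr fun i hi => Function.update_of_ne (Finset.mem_erase.mp hi).1 _ _
  have key1 : ∀ (x : Fin d → ℝ) (z : ℝ),
      f x - f (Function.update x j z) = g x - g (Function.update x j z) := by
    intro x z
    rw [hdecomp x, hdecomp (Function.update x j z), hinv x z]
    ring
  -- mean-zero for g in coordinate j
  have key2 : ∀ᵐ x ∂cubeMeasure d,
      Integrable (fun z => g (Function.update x j z)) unif ∧
      ∫ z, g (Function.update x j z) ∂unif = 0 := by
    have hA : ∀ᵐ x ∂cubeMeasure d, ∀ u ∈ S,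
        Integrable (fun z => anova f u (Function.update x j z)) unif :=
      (ae_ball_iff S.countable_toSet).mpr fun u _ =>
        slice_integrable ((memL2_anova hsm hf u).integrable one_le_two) j
    have hB : ∀ᵐ x ∂cubeMeasure d, ∀ u ∈ S,
        ∫ z, anova f u (Function.update x j z) ∂unif = 0 :=
      (ae_ball_iff S.countable_toSet).mpr fun u hu =>
        anova_update_integral_zero hsm hf u j (Finset.mem_filter.mp hu).2
    filter_upwards [hA, hB] with x hxA hxB
    refine ⟨integrable_finset_sum _ fun u hu => hxA u hu, ?_⟩
    have h3 : ∫ z, ∑ u ∈ S, anova f u (Function.update x j z) ∂unif = 0 := by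
      rw [integral_finset_sum _ fun u hu => hxA u hu]
      exact Finset.sum_eq_zero hxB
    exact h3
  -- LHS = ∫ g²
  have hC : ∫ x, g x ^ 2 ∂cubeMeasure d
      = ∑ u ∈ S, ∫ x, (anova f u x) ^ 2 ∂cubeMeasure d := by
    have hsq : ∀ x, g x ^ 2 = ∑ u ∈ S, ∑ v ∈ S, anova f u x * anova f v x := by
      intro x
      rw [hg]
      simp only [pow_two]
      exact Finset.sum_mul_sum S S (fun u => anova f u x) (fun v => anova f v x)
    calc ∫ x, g x ^ 2 ∂cubeMeasure d
        = ∫ x, ∑ u ∈ S, ∑ v ∈ S, anova f u x * anova f v x ∂cubeMeasure d :=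
          integral_congr_ae (Filter.Eventually.of_forall hsq)
      _ = ∑ u ∈ S, ∫ x, ∑ v ∈ S, anova f u x * anova f v x ∂cubeMeasure d :=
          integral_finset_sum _ fun u _ => integrable_finset_sum _ fun v _ =>
            memL2_mul_integrable (memL2_anova hsm hf u) (memL2_anova hsm hf v)
      _ = ∑ u ∈ S, ∑ v ∈ S, ∫ x, anova f u x * anova f v x ∂cubeMeasure d :=
          Finset.sum_congr rfl fun u _ => integral_finset_sum _ fun v _ =>
            memL2_mul_integrable (memL2_anova hsm hf u) (memL2_anova hsm hf v)
      _ = ∑ u ∈ S, ∫ x, (anova f u x) ^ 2 ∂cubeMeasure d := by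
          refine Finset.sum_congr rfl fun u hu => ?_
          rw [Finset.sum_eq_single_of_mem u hu fun v _ hvu => orth hsm hf (Ne.symm hvu)]
          refine integral_congr_ae (Filter.Eventually.of_forall fun x => ?_)
          show anova f u x * anova f u x = anova f u x ^ 2
          rw [pow_two]
  -- RHS computation
  have hgp1 : MemLp (fun p : (Fin d → ℝ) × ℝ => g p.1) 2 ((cubeMeasure d).prod unif) :=
    hg2.comp_measurePreserving mp_fst
  have hgp2 : MemLp (fun p : (Fin d → ℝ) × ℝ => g (updMap j p)) 2
      ((cubeMeasure d).prod unif) := hg2.comp_measurePreserving (mp_updMap j)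
  have hG2 : MemLp (fun p : (Fin d → ℝ) × ℝ => g p.1 - g (updMap j p)) 2
      ((cubeMeasure d).prod unif) := hgp1.sub hgp2
  have hGsq : Integrable (fun p : (Fin d → ℝ) × ℝ => (g p.1 - g (updMap j p)) ^ 2)
      ((cubeMeasure d).prod unif) := hG2.integrable_sq
  have hRHS1 : ∫ x, (∫ z in Set.Icc (0 : ℝ) 1, (f x - f (Function.update x j z)) ^ 2)
        ∂cubeMeasure d
      = ∫ x, (∫ z, (g x - g (Function.update x j z)) ^ 2 ∂unif) ∂cubeMeasure d := by
    refine integral_congr_ae (Filter.Eventually.of_forall fun x => ?_)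
    refine integral_congr_ae (Filter.Eventually.of_forall fun z => ?_)
    show (f x - f (Function.update x j z)) ^ 2 = (g x - g (Function.update x j z)) ^ 2
    rw [key1]
  have hRHS2 : ∫ x, (∫ z, (g x - g (Function.update x j z)) ^ 2 ∂unif) ∂cubeMeasure d
      = ∫ p, (g p.1 - g (updMap j p)) ^ 2 ∂((cubeMeasure d).prod unif) :=
    (integral_prod _ hGsq).symm
  have hint1 : Integrable (fun p : (Fin d → ℝ) × ℝ => g p.1 ^ 2)
      ((cubeMeasure d).prod unif) := hgp1.integrable_sq
  have hint2 : Integrable (fun p : (Fin d → ℝ) × ℝ => g (updMap j p) ^ 2)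
      ((cubeMeasure d).prod unif) := hgp2.integrable_sq
  have hint3 : Integrable (fun p : (Fin d → ℝ) × ℝ => g p.1 * g (updMap j p))
      ((cubeMeasure d).prod unif) := memL2_mul_integrable hgp1 hgp2
  have hexp : ∫ p, (g p.1 - g (updMap j p)) ^ 2 ∂((cubeMeasure d).prod unif)
      = ∫ p, g p.1 ^ 2 ∂((cubeMeasure d).prod unif)
        + ∫ p, g (updMap j p) ^ 2 ∂((cubeMeasure d).prod unif)
        - 2 * ∫ p, g p.1 * g (updMap j p) ∂((cubeMeasure d).prod unif) := by
    have hpt : ∀ p : (Fin d → ℝ) × ℝ, (g p.1 - g (updMap j p)) ^ 2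
        = (g p.1 ^ 2 + g (updMap j p) ^ 2) - 2 * (g p.1 * g (updMap j p)) := fun p => by ring
    simp_rw [hpt]
    have hadd : Integrable (fun p : (Fin d → ℝ) × ℝ => g p.1 ^ 2 + g (updMap j p) ^ 2)
        ((cubeMeasure d).prod unif) := hint1.add hint2
    rw [integral_sub hadd (hint3.const_mul 2), integral_add hint1 hint2,
      integral_const_mul]
  have hfsteq : ∫ p, g p.1 ^ 2 ∂((cubeMeasure d).prod unif) = ∫ x, g x ^ 2 ∂cubeMeasure d :=
    integral_comp_mp mp_fst ((hgsm.pow 2).aestronglyMeasurable)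
  have hupdeq : ∫ p, g (updMap j p) ^ 2 ∂((cubeMeasure d).prod unif)
      = ∫ x, g x ^ 2 ∂cubeMeasure d :=
    integral_comp_mp (mp_updMap j) ((hgsm.pow 2).aestronglyMeasurable)
  have hcross : ∫ p, g p.1 * g (updMap j p) ∂((cubeMeasure d).prod unif) = 0 := by
    rw [integral_prod _ hint3]
    have hae : ∀ᵐ x ∂cubeMeasure d, ∫ z, g x * g (updMap j (x, z)) ∂unif = 0 := by
      filter_upwards [key2] with x hx
      rw [integral_const_mul]
      rw [show (∫ z, g (updMap j (x, z)) ∂unif) = 0 from hx.2, mul_zero]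
    rw [integral_congr_ae hae, integral_zero]
  rw [hRHS1, hRHS2, hexp, hfsteq, hupdeq, hcross, hC]
  ring

end Key

lemma anova_ae_congr {f f' : (Fin d → ℝ) → ℝ} (h : f =ᵐ[cubeMeasure d] f')
    (u : Finset (Fin d)) : anova f u =ᵐ[cubeMeasure d] anova f' u := by
  induction u using Finset.strongInduction with
  | _ u ih =>
    have hpp : (fun p : (Fin d → ℝ) × (Fin d → ℝ) => f (piece u p))
        =ᵐ[(cubeMeasure d).prod (cubeMeasure d)] fun p => f' (piece u p) :=
      (mp_piece u).quasiMeasurePreserving.ae_eq_comp h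
    have hpint : ∀ᵐ x ∂cubeMeasure d, pintF f u x = pintF f' u x := by
      filter_upwards [Measure.ae_ae_of_ae_prod hpp] with x hx
      exact integral_congr_ae hx
    have hsub : ∀ᵐ x ∂cubeMeasure d, ∀ v ∈ u.ssubsets, anova f v x = anova f' v x :=
      (ae_ball_iff u.ssubsets.countable_toSet).mpr fun v hv =>
        ih v (Finset.mem_ssubsets.mp hv)
    filter_upwards [hpint, hsub] with x hx1 hx2
    rw [anova_eq, anova_eq, hx1]
    congr 1
    exact Finset.sum_congr rfl hx2

end Jansen

/-- Jansen's identity: for `f ∈ L²([0,1]^d)` and a coordinate `j`,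
the total Sobol' index `τ̄_j² = ∑_{u : j ∈ u} σ_u²` equals
`(1/2)∫∫ (f(x) − f(x_{−j}:z_j))² dz_j dx`, where `x_{−j}:z_j` replaces the `j`-th
coordinate of `x` by `z_j`. -/
theorem stmt_4 {d : ℕ} (f : (Fin d → ℝ) → ℝ) (hf : MemLp f 2 (cubeMeasure d))
    (j : Fin d) :
    ∑ u ∈ Finset.univ.filter (fun u : Finset (Fin d) => j ∈ u),
        ∫ x, (anova f u x) ^ 2 ∂cubeMeasure d
      = (1 / 2) *
          ∫ x, (∫ z in Set.Icc (0 : ℝ) 1, (f x - f (Function.update x j z)) ^ 2)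
            ∂cubeMeasure d := by
  classical
  have hff' : f =ᵐ[cubeMeasure d] hf.1.mk f := hf.1.ae_eq_mk
  set f' : (Fin d → ℝ) → ℝ := hf.1.mk f with hf'def
  have hsm' : StronglyMeasurable f' := hf.1.stronglyMeasurable_mk
  have hf' : MemLp f' 2 (cubeMeasure d) := hf.ae_eq hff'
  have hmain := Jansen.main_sm hsm' hf' j
  have hL : ∀ u : Finset (Fin d),
      ∫ x, (anova f u x) ^ 2 ∂cubeMeasure d = ∫ x, (anova f' u x) ^ 2 ∂cubeMeasure d := fun u =>
    integral_congr_ae ((Jansen.anova_ae_congr hff' u).mono fun x hx => by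
      show anova f u x ^ 2 = anova f' u x ^ 2
      rw [hx])
  have hcomp : (fun p : (Fin d → ℝ) × ℝ => f (Jansen.updMap j p))
      =ᵐ[(cubeMeasure d).prod Jansen.unif] fun p => f' (Jansen.updMap j p) :=
    (Jansen.mp_updMap j).quasiMeasurePreserving.ae_eq_comp hff'
  have hR : ∫ x, (∫ z in Set.Icc (0 : ℝ) 1, (f x - f (Function.update x j z)) ^ 2)
        ∂cubeMeasure d
      = ∫ x, (∫ z in Set.Icc (0 : ℝ) 1, (f' x - f' (Function.update x j z)) ^ 2)
        ∂cubeMeasure d := by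
    refine integral_congr_ae ?_
    filter_upwards [hff', MeasureTheory.Measure.ae_ae_of_ae_prod hcomp] with x hx1 hx2
    refine integral_congr_ae ?_
    filter_upwards [hx2] with z hz
    have hz' : f (Function.update x j z) = f' (Function.update x j z) := hz
    rw [hx1, hz']
  calc ∑ u ∈ Finset.univ.filter (fun u : Finset (Fin d) => j ∈ u),
        ∫ x, (anova f u x) ^ 2 ∂cubeMeasure d
      = ∑ u ∈ Finset.univ.filter (fun u : Finset (Fin d) => j ∈ u),
        ∫ x, (anova f' u x) ^ 2 ∂cubeMeasure d := Finset.sum_congr rfl fun u _ => hL u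
    _ = (1 / 2) *
          ∫ x, (∫ z in Set.Icc (0 : ℝ) 1, (f' x - f' (Function.update x j z)) ^ 2)
            ∂cubeMeasure d := hmain
    _ = (1 / 2) *
          ∫ x, (∫ z in Set.Icc (0 : ℝ) 1, (f x - f (Function.update x j z)) ^ 2)
            ∂cubeMeasure d := by rw [hR]
end

section
/- Let f ∈ L²([0,1]^d) with ANOVA variance components σ_u². Then the dimension-weighted sum of variance components admits the representation ∑_{u ⊆ {1,…,d}} |u| σ_u² = ∑_{j=1}^d (1/2) ∫_{[0,1]^d} ∫_0^1 ( f(x) − f(x_{−j}:z_j) )² dz_j dx, where x_{−j}:z_j is x with its j-th coordinate replaced by z_j. Consequently, if σ² = ∑_{u ≠ ∅} σ_u² > 0, the mean dimension ν(f) = ∑_u |u| σ_u² / σ² equals ∑_{j=1}^d τ̄_j² / σ² with τ̄_j² = ∑_{u : j ∈ u} σ_u², and can be computed from (d+1)-dimensional expectations without constructing any ANOVA effect. -/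
open MeasureTheory

open Finset

namespace Stmt5Aux
noncomputable abbrev nu : Measure ℝ := volume.restrict (Set.Icc (0 : ℝ) 1)
instance : IsProbabilityMeasure nu :=
  ⟨by rw [Measure.restrict_apply_univ, Real.volume_Icc]; norm_num⟩
instance (d : ℕ) : IsProbabilityMeasure (cubeMeasure d) := by
  unfold cubeMeasure; infer_instance
variable {d : ℕ}

lemma measurable_upd (j : Fin d) :
    Measurable (fun p : (Fin d → ℝ) × ℝ => Function.update p.1 j p.2) := by
  apply measurable_pi_lambda
  intro i
  simp only [Function.update_apply]
  by_cases hi : i = j <;> simp only [hi, if_true, if_false]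
  · exact measurable_snd
  · exact (measurable_pi_apply i).comp measurable_fst

lemma upd_mp (j : Fin d) :
    MeasurePreserving (fun p : (Fin d → ℝ) × ℝ => Function.update p.1 j p.2)
      ((cubeMeasure d).prod nu) (cubeMeasure d) := by
  refine ⟨measurable_upd j, ?_⟩
  show Measure.map _ _ = Measure.pi fun _ => nu
  refine (Measure.pi_eq fun s hs => ?_).symm
  rw [Measure.map_apply (measurable_upd j) (MeasurableSet.univ_pi hs)]
  have hpre : (fun p : (Fin d → ℝ) × ℝ => Function.update p.1 j p.2) ⁻¹' Set.pi Set.univ s =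
      (Set.pi Set.univ fun i => if i = j then Set.univ else s i) ×ˢ s j := by
    ext ⟨x, z⟩
    simp only [Set.mem_preimage, Set.mem_pi, Set.mem_univ, true_implies, Set.mem_prod,
      Function.update_apply]
    constructor
    · intro h
      refine ⟨fun i => ?_, by simpa using h j⟩
      by_cases hi : i = j
      · simp [hi]
      · simpa [hi] using h i
    · rintro ⟨h1, h2⟩ i
      by_cases hi : i = j
      · simpa [hi] using h2
      · simpa [hi] using h1 i
  rw [hpre, Measure.prod_prod]
  unfold cubeMeasure
  rw [Measure.pi_pi]
  have h1 : (∏ i, nu (if i = j then Set.univ else s i)) = ∏ i ∈ Finset.univ.erase j, nu (s i) := by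
    rw [← Finset.prod_erase_mul Finset.univ _ (Finset.mem_univ j)]
    simp only [eq_self_iff_true, if_true, measure_univ, mul_one]
    exact Finset.prod_congr rfl fun i hi => by simp [Finset.ne_of_mem_erase hi]
  rw [h1, Finset.prod_erase_mul Finset.univ _ (Finset.mem_univ j)]

lemma eval_map (j : Fin d) :
    (cubeMeasure d).map (fun y => y j) = nu := by
  refine Measure.ext fun t ht => ?_
  rw [Measure.map_apply (measurable_pi_apply j) ht]
  have hpre : (fun y : Fin d → ℝ => y j) ⁻¹' t =
      Set.pi Set.univ (fun i => if i = j then t else Set.univ) := by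
    ext y
    simp only [Set.mem_preimage, Set.mem_pi, Set.mem_univ, true_implies]
    constructor
    · intro h i
      by_cases hi : i = j <;> simp [hi, h]
    · intro h
      simpa using h j
  rw [hpre]
  show Measure.pi (fun _ => nu) _ = _
  rw [Measure.pi_pi]
  rw [← Finset.prod_erase_mul Finset.univ _ (Finset.mem_univ j)]
  have h1 : (∏ i ∈ Finset.univ.erase j, nu (if i = j then t else Set.univ)) = 1 := by
    refine Finset.prod_eq_one fun i hi => by simp [Finset.ne_of_mem_erase hi]
  rw [h1, if_pos rfl, one_mul]
/-- mix u (x,y) : coordinates in u from x, others from y. -/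
def mix (u : Finset (Fin d)) (p : (Fin d → ℝ) × (Fin d → ℝ)) : Fin d → ℝ :=
  fun i => if i ∈ u then p.1 i else p.2 i

lemma measurable_mix (u : Finset (Fin d)) : Measurable (mix u) := by
  apply measurable_pi_lambda
  intro i
  by_cases hi : i ∈ u <;> simp only [mix, hi, if_true, if_false]
  · exact (measurable_pi_apply i).comp measurable_fst
  · exact (measurable_pi_apply i).comp measurable_snd

lemma mix_mp (u : Finset (Fin d)) :
    MeasurePreserving (mix u) ((cubeMeasure d).prod (cubeMeasure d)) (cubeMeasure d) := by
  refine ⟨measurable_mix u, ?_⟩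
  show Measure.map _ _ = Measure.pi fun _ => nu
  refine (Measure.pi_eq fun s hs => ?_).symm
  rw [Measure.map_apply (measurable_mix u) (MeasurableSet.univ_pi hs)]
  have hpre : mix u ⁻¹' Set.pi Set.univ s =
      (Set.pi Set.univ fun i => if i ∈ u then s i else Set.univ) ×ˢ
      (Set.pi Set.univ fun i => if i ∈ u then Set.univ else s i) := by
    ext ⟨x, y⟩
    simp only [mix, Set.mem_preimage, Set.mem_pi, Set.mem_univ, true_implies, Set.mem_prod]
    constructor
    · intro h
      refine ⟨fun i => ?_, fun i => ?_⟩ <;> by_cases hi : i ∈ u <;>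
        simp only [hi, if_true, if_false, Set.mem_univ] <;> simpa [hi] using h i
    · rintro ⟨h1, h2⟩ i
      by_cases hi : i ∈ u
      · simpa [hi] using h1 i
      · simpa [hi] using h2 i
  rw [hpre, Measure.prod_prod]
  unfold cubeMeasure
  rw [Measure.pi_pi, Measure.pi_pi, ← Finset.prod_mul_distrib]
  refine Finset.prod_congr rfl fun i _ => ?_
  by_cases hi : i ∈ u <;> simp [hi]


/-- the conditional-expectation-like averaging operator -/
noncomputable def Pint (g : (Fin d → ℝ) → ℝ) (u : Finset (Fin d)) (x : Fin d → ℝ) : ℝ :=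
  ∫ y, g (mix u (x, y)) ∂cubeMeasure d

lemma anova_eq (f : (Fin d → ℝ) → ℝ) (u : Finset (Fin d)) (x : Fin d → ℝ) :
    anova f u x = Pint f u x - ∑ v ∈ u.ssubsets, anova f v x := by
  rw [anova]
  rw [← Finset.sum_attach u.ssubsets (fun v => anova f v x)]
  rfl

lemma sum_anova (f : (Fin d → ℝ) → ℝ) (u : Finset (Fin d)) (x : Fin d → ℝ) :
    ∑ v ∈ u.powerset, anova f v x = Pint f u x := by
  have hu : u ∈ u.powerset := Finset.mem_powerset_self u
  rw [← Finset.sum_erase_add _ _ hu]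
  have : u.powerset.erase u = u.ssubsets := rfl
  rw [this, anova_eq]
  ring

section Core

lemma fst_mp : MeasurePreserving (Prod.fst) ((cubeMeasure d).prod (cubeMeasure d)) (cubeMeasure d) :=
  ⟨measurable_fst, by simp⟩

lemma fst_mp' : MeasurePreserving (Prod.fst) ((cubeMeasure d).prod nu) (cubeMeasure d) :=
  ⟨measurable_fst, by simp⟩

lemma memL2_comp {α : Type*} [MeasurableSpace α] {ρ : Measure α} {g : (Fin d → ℝ) → ℝ}
    (hgm : Measurable g) (hg2 : MemLp g 2 (cubeMeasure d)) {e : α → Fin d → ℝ}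
    (he : MeasurePreserving e ρ (cubeMeasure d)) : MemLp (fun a => g (e a)) 2 ρ := by
  have h1 : MemLp g 2 (ρ.map e) := by rwa [he.map_eq]
  exact (memLp_map_measure_iff
    (by rw [he.map_eq]; exact hgm.aestronglyMeasurable) he.measurable.aemeasurable).mp h1

lemma integral_comp_mp {α : Type*} [MeasurableSpace α] {ρ : Measure α} {g : (Fin d → ℝ) → ℝ}
    (hgm : Measurable g) {e : α → Fin d → ℝ}
    (he : MeasurePreserving e ρ (cubeMeasure d)) :
    ∫ a, g (e a) ∂ρ = ∫ x, g x ∂cubeMeasure d := by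
  rw [← he.map_eq]
  exact (integral_map he.measurable.aemeasurable
    (by rw [he.map_eq]; exact hgm.aestronglyMeasurable)).symm

lemma integrable_mul_L2 {α : Type*} [MeasurableSpace α] {ρ : Measure α} {a b : α → ℝ}
    (ha : MemLp a 2 ρ) (hb : MemLp b 2 ρ) : Integrable (fun x => a x * b x) ρ := by
  have h : MemLp (b • a) 1 ρ := ha.smul (φ := b) hb
  have he : (b • a) = fun x => a x * b x := by
    funext x; simp [mul_comm]
  rw [he] at h
  exact memLp_one_iff_integrable.mp h

variable {f : (Fin d → ℝ) → ℝ}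

lemma measurable_Pint {g : (Fin d → ℝ) → ℝ} (hgm : Measurable g) (u : Finset (Fin d)) :
    Measurable (Pint g u) :=
  ((hgm.comp (measurable_mix u)).stronglyMeasurable.integral_prod_right').measurable

lemma memL2_Pint {g : (Fin d → ℝ) → ℝ} (hgm : Measurable g)
    (hg2 : MemLp g 2 (cubeMeasure d)) (u : Finset (Fin d)) :
    MemLp (Pint g u) 2 (cubeMeasure d) := by
  rw [memLp_two_iff_integrable_sq (measurable_Pint hgm u).aestronglyMeasurable]
  have e1 : MeasurePreserving
      (fun q : (Fin d → ℝ) × ((Fin d → ℝ) × (Fin d → ℝ)) => mix u (q.1, q.2.1))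
      ((cubeMeasure d).prod ((cubeMeasure d).prod (cubeMeasure d))) (cubeMeasure d) := by
    have h1 : MeasurePreserving
        (fun q : (Fin d → ℝ) × ((Fin d → ℝ) × (Fin d → ℝ)) => (q.1, q.2.1))
        ((cubeMeasure d).prod ((cubeMeasure d).prod (cubeMeasure d)))
        ((cubeMeasure d).prod (cubeMeasure d)) :=
      (MeasurePreserving.id (cubeMeasure d)).prod fst_mp
    exact (mix_mp u).comp h1
  have e2 : MeasurePreserving
      (fun q : (Fin d → ℝ) × ((Fin d → ℝ) × (Fin d → ℝ)) => mix u (q.1, q.2.2))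
      ((cubeMeasure d).prod ((cubeMeasure d).prod (cubeMeasure d))) (cubeMeasure d) := by
    have h1 : MeasurePreserving
        (fun q : (Fin d → ℝ) × ((Fin d → ℝ) × (Fin d → ℝ)) => (q.1, q.2.2))
        ((cubeMeasure d).prod ((cubeMeasure d).prod (cubeMeasure d)))
        ((cubeMeasure d).prod (cubeMeasure d)) :=
      (MeasurePreserving.id (cubeMeasure d)).prod ⟨measurable_snd, by simp⟩
    exact (mix_mp u).comp h1
  have hG : Integrable (fun q : (Fin d → ℝ) × ((Fin d → ℝ) × (Fin d → ℝ)) =>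
      g (mix u (q.1, q.2.1)) * g (mix u (q.1, q.2.2)))
      ((cubeMeasure d).prod ((cubeMeasure d).prod (cubeMeasure d))) :=
    integrable_mul_L2 (memL2_comp hgm hg2 e1) (memL2_comp hgm hg2 e2)
  refine (hG.integral_prod_left).congr ?_
  refine Filter.Eventually.of_forall fun x => ?_
  have := integral_prod_mul (μ := cubeMeasure d) (ν := cubeMeasure d)
    (fun y => g (mix u (x, y))) (fun y => g (mix u (x, y)))
  show (∫ p, g (mix u (x, p.1)) * g (mix u (x, p.2))
      ∂((cubeMeasure d).prod (cubeMeasure d))) = Pint g u x ^ 2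
  rw [this, Pint, sq]

lemma anova_fun_eq (f : (Fin d → ℝ) → ℝ) (u : Finset (Fin d)) :
    anova f u = fun x => Pint f u x - ∑ v ∈ u.ssubsets, anova f v x :=
  funext (anova_eq f u)

lemma anova_meas_memL2 (hfm : Measurable f) (hf2 : MemLp f 2 (cubeMeasure d)) :
    ∀ u : Finset (Fin d), Measurable (anova f u) ∧ MemLp (anova f u) 2 (cubeMeasure d) := by
  intro u
  induction u using Finset.strongInduction with
  | _ u ih =>
    rw [anova_fun_eq]
    constructor
    · exact (measurable_Pint hfm u).sub
        (Finset.measurable_sum _ fun v hv => (ih v (Finset.mem_ssubsets.mp hv)).1)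
    · exact (memL2_Pint hfm hf2 u).sub
        (memLp_finset_sum _ fun v hv => (ih v (Finset.mem_ssubsets.mp hv)).2)

/-- `h` depends only on the coordinates in `v`. -/
def DOn (h : (Fin d → ℝ) → ℝ) (v : Finset (Fin d)) : Prop :=
  ∀ p : (Fin d → ℝ) × (Fin d → ℝ), h (mix v p) = h p.1

lemma dOn_Pint (g : (Fin d → ℝ) → ℝ) {w v : Finset (Fin d)} (hwv : w ⊆ v) :
    DOn (Pint g w) v := by
  intro p
  unfold Pint
  have : ∀ y, mix w (mix v p, y) = mix w (p.1, y) := by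
    intro y; funext i
    by_cases hi : i ∈ w <;> simp [mix, hi, hwv]
    intro h; exact absurd (hwv hi) h
  simp_rw [this]

lemma dOn_anova {u v : Finset (Fin d)} (huv : u ⊆ v) : DOn (anova f u) v := by
  induction u using Finset.strongInduction with
  | _ u ih =>
    intro p
    rw [anova_fun_eq]
    simp only
    rw [dOn_Pint f huv p]
    congr 1
    refine Finset.sum_congr rfl fun w hw => ?_
    have hw' := Finset.mem_ssubsets.mp hw
    exact ih w hw' ((subset_of_ssubset hw').trans huv) p

lemma proj_adjoint {g h : (Fin d → ℝ) → ℝ} (hgm : Measurable g)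
    (hg2 : MemLp g 2 (cubeMeasure d)) (hhm : Measurable h) (hh2 : MemLp h 2 (cubeMeasure d))
    {v : Finset (Fin d)} (hdep : DOn h v) :
    ∫ x, Pint g v x * h x ∂cubeMeasure d = ∫ x, g x * h x ∂cubeMeasure d := by
  have hint : Integrable (fun p : (Fin d → ℝ) × (Fin d → ℝ) => g (mix v p) * h p.1)
      ((cubeMeasure d).prod (cubeMeasure d)) :=
    integrable_mul_L2 (memL2_comp hgm hg2 (mix_mp v)) (memL2_comp hhm hh2 fst_mp)
  calc ∫ x, Pint g v x * h x ∂cubeMeasure d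
      = ∫ x, ∫ y, g (mix v (x, y)) * h x ∂cubeMeasure d ∂cubeMeasure d := by
        refine integral_congr_ae (Filter.Eventually.of_forall fun x => ?_)
        exact (integral_mul_const (h x) _).symm
    _ = ∫ p : (Fin d → ℝ) × (Fin d → ℝ), g (mix v p) * h p.1
          ∂((cubeMeasure d).prod (cubeMeasure d)) := by
        have h2 : Integrable (Function.uncurry fun x y => g (mix v (x, y)) * h x)
            ((cubeMeasure d).prod (cubeMeasure d)) := hint
        rw [← integral_integral h2]
    _ = ∫ p : (Fin d → ℝ) × (Fin d → ℝ), g (mix v p) * h (mix v p)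
          ∂((cubeMeasure d).prod (cubeMeasure d)) :=
        integral_congr_ae (Filter.Eventually.of_forall fun p => by
          show g (mix v p) * h p.1 = g (mix v p) * h (mix v p)
          rw [hdep p])
    _ = ∫ x, g x * h x ∂cubeMeasure d :=
        integral_comp_mp (hgm.mul hhm) (mix_mp v)

lemma mix_mix {w : Finset (Fin d)} {j : Fin d} (hjw : j ∈ w)
    (x y z : Fin d → ℝ) :
    mix w (mix (Finset.univ.erase j) (x, y), z) = mix (w.erase j) (x, mix {j} (y, z)) := by
  funext i
  by_cases hij : i = j
  · subst hij
    simp [mix, hjw]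
  · by_cases hiw : i ∈ w <;> simp [mix, hij, hiw]

lemma Pint_of_dOn {g : (Fin d → ℝ) → ℝ} {v : Finset (Fin d)} (hd : DOn g v)
    (x : Fin d → ℝ) : Pint g v x = g x := by
  unfold Pint
  rw [integral_congr_ae (Filter.Eventually.of_forall fun y => hd (x, y))]
  simp

lemma tower (hfm : Measurable f) (hf2 : MemLp f 2 (cubeMeasure d)) {w : Finset (Fin d)}
    {j : Fin d} (hjw : j ∈ w) :
    ∀ᵐ x ∂cubeMeasure d,
      Pint (Pint f w) (Finset.univ.erase j) x = Pint f (w.erase j) x := by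
  have e3 : MeasurePreserving
      (fun r : (Fin d → ℝ) × ((Fin d → ℝ) × (Fin d → ℝ)) => mix (w.erase j) (r.1, mix {j} r.2))
      ((cubeMeasure d).prod ((cubeMeasure d).prod (cubeMeasure d))) (cubeMeasure d) :=
    (mix_mp _).comp ((MeasurePreserving.id _).prod (mix_mp {j}))
  have H : Integrable
      (fun r : (Fin d → ℝ) × ((Fin d → ℝ) × (Fin d → ℝ)) =>
        f (mix (w.erase j) (r.1, mix {j} r.2)))
      ((cubeMeasure d).prod ((cubeMeasure d).prod (cubeMeasure d))) :=
    (memL2_comp hfm hf2 e3).integrable one_le_two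
  filter_upwards [H.prod_right_ae] with x hx
  have key : ∀ y, Pint f w (mix (Finset.univ.erase j) (x, y))
      = ∫ z, f (mix (w.erase j) (x, mix {j} (y, z))) ∂cubeMeasure d := by
    intro y
    refine integral_congr_ae (Filter.Eventually.of_forall fun z => ?_)
    show f (mix w (mix (Finset.univ.erase j) (x, y), z)) = f (mix (w.erase j) (x, mix {j} (y, z)))
    rw [mix_mix hjw]
  show (∫ y, Pint f w (mix (Finset.univ.erase j) (x, y)) ∂cubeMeasure d) = _
  simp_rw [key]
  have hx' : Integrable
      (Function.uncurry fun y z => f (mix (w.erase j) (x, mix {j} (y, z))))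
      ((cubeMeasure d).prod (cubeMeasure d)) := hx
  rw [integral_integral hx']
  exact integral_comp_mp (g := fun q => f (mix (w.erase j) (x, q)))
    (hfm.comp ((measurable_mix _).comp (measurable_const.prodMk measurable_id)))
    (mix_mp {j})

lemma filter_not_mem_ssubsets {u : Finset (Fin d)} {j : Fin d} (hju : j ∈ u) :
    u.ssubsets.filter (fun v => j ∉ v) = (u.erase j).powerset := by
  ext v
  simp only [Finset.mem_filter, Finset.mem_ssubsets, Finset.mem_powerset,
    Finset.subset_erase]
  constructor
  · rintro ⟨hv, hjv⟩; exact ⟨subset_of_ssubset hv, hjv⟩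
  · rintro ⟨hv, hjv⟩
    refine ⟨lt_of_le_of_ne hv ?_, hjv⟩
    rintro rfl; exact hjv hju

lemma Pint_anova_zero (hfm : Measurable f) (hf2 : MemLp f 2 (cubeMeasure d)) (j : Fin d) :
    ∀ u : Finset (Fin d), j ∈ u →
      (∀ᵐ x ∂cubeMeasure d, Pint (anova f u) (Finset.univ.erase j) x = 0) := by
  intro u
  induction u using Finset.strongInduction with
  | _ u ih =>
    intro hju
    have hPf : ∀ᵐ x ∂cubeMeasure d,
        Integrable (fun y => Pint f u (mix (Finset.univ.erase j) (x, y))) (cubeMeasure d) :=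
      ((memL2_comp (measurable_Pint hfm u) (memL2_Pint hfm hf2 u)
        (mix_mp (Finset.univ.erase j))).integrable one_le_two).prod_right_ae
    have hAv : ∀ᵐ x ∂cubeMeasure d, ∀ v ∈ (u.ssubsets : Set (Finset (Fin d))),
        Integrable (fun y => anova f v (mix (Finset.univ.erase j) (x, y))) (cubeMeasure d) := by
      rw [ae_ball_iff u.ssubsets.countable_toSet]
      intro v _
      exact ((memL2_comp (anova_meas_memL2 hfm hf2 v).1 (anova_meas_memL2 hfm hf2 v).2
        (mix_mp (Finset.univ.erase j))).integrable one_le_two).prod_right_ae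
    have hIH : ∀ᵐ x ∂cubeMeasure d, ∀ v ∈ (u.ssubsets : Set (Finset (Fin d))),
        j ∈ v → Pint (anova f v) (Finset.univ.erase j) x = 0 := by
      rw [ae_ball_iff u.ssubsets.countable_toSet]
      intro v hv
      by_cases hjv : j ∈ v
      · filter_upwards [ih v (Finset.mem_ssubsets.mp (by exact_mod_cast hv)) hjv] with x hx
        intro _; exact hx
      · exact Filter.Eventually.of_forall fun x h => absurd h hjv
    filter_upwards [hPf, hAv, hIH, tower hfm hf2 hju] with x hx1 hx2 hx3 hx4
    have step1 : Pint (anova f u) (Finset.univ.erase j) x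
        = Pint (Pint f u) (Finset.univ.erase j) x -
          ∑ v ∈ u.ssubsets, Pint (anova f v) (Finset.univ.erase j) x := by
      show (∫ y, anova f u (mix (Finset.univ.erase j) (x, y)) ∂cubeMeasure d) = _
      have : ∀ y, anova f u (mix (Finset.univ.erase j) (x, y))
          = Pint f u (mix (Finset.univ.erase j) (x, y)) -
            ∑ v ∈ u.ssubsets, anova f v (mix (Finset.univ.erase j) (x, y)) := by
        intro y; exact anova_eq f u _
      simp_rw [this]
      rw [integral_sub hx1 (integrable_finset_sum _ fun v hv => hx2 v (by exact_mod_cast hv))]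
      rw [integral_finset_sum _ fun v hv => hx2 v (by exact_mod_cast hv)]
      rfl
    rw [step1, hx4]
    rw [← Finset.sum_filter_add_sum_filter_not u.ssubsets (fun v => j ∈ v)]
    have hz : ∑ v ∈ u.ssubsets.filter (fun v => j ∈ v),
        Pint (anova f v) (Finset.univ.erase j) x = 0 := by
      refine Finset.sum_eq_zero fun v hv => ?_
      have hv' := Finset.mem_filter.mp hv
      exact hx3 v (by exact_mod_cast hv'.1) hv'.2
    have hnz : ∑ v ∈ u.ssubsets.filter (fun v => j ∉ v),
        Pint (anova f v) (Finset.univ.erase j) x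
        = ∑ v ∈ (u.erase j).powerset, anova f v x := by
      rw [filter_not_mem_ssubsets hju]
      refine Finset.sum_congr rfl fun v hv => ?_
      have hvs : v ⊆ Finset.univ.erase j := by
        have := (Finset.subset_erase.mp (Finset.mem_powerset.mp hv)).2
        exact Finset.subset_erase.mpr ⟨Finset.subset_univ v, this⟩
      exact Pint_of_dOn (dOn_anova hvs) x
    rw [hz, hnz, sum_anova]
    ring

lemma anova_orth_aux (hfm : Measurable f) (hf2 : MemLp f 2 (cubeMeasure d))
    {u v : Finset (Fin d)} {j : Fin d} (hju : j ∈ u) (hjv : j ∉ v) :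
    ∫ x, anova f u x * anova f v x ∂cubeMeasure d = 0 := by
  have hdep : DOn (anova f v) (Finset.univ.erase j) :=
    dOn_anova (Finset.subset_erase.mpr ⟨Finset.subset_univ v, hjv⟩)
  have hB := proj_adjoint (anova_meas_memL2 hfm hf2 u).1 (anova_meas_memL2 hfm hf2 u).2
    (anova_meas_memL2 hfm hf2 v).1 (anova_meas_memL2 hfm hf2 v).2 hdep
  rw [← hB]
  have h0 : ∀ᵐ x ∂cubeMeasure d,
      Pint (anova f u) (Finset.univ.erase j) x * anova f v x = 0 := by
    filter_upwards [Pint_anova_zero hfm hf2 j u hju] with x hx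
    rw [hx, zero_mul]
  rw [integral_congr_ae h0, integral_zero]

lemma anova_orth (hfm : Measurable f) (hf2 : MemLp f 2 (cubeMeasure d))
    {u v : Finset (Fin d)} (hne : u ≠ v) :
    ∫ x, anova f u x * anova f v x ∂cubeMeasure d = 0 := by
  by_cases h : ∃ j ∈ u, j ∉ v
  · obtain ⟨j, hju, hjv⟩ := h
    exact anova_orth_aux hfm hf2 hju hjv
  · push_neg at h
    have huv : u ⊆ v := h
    have : ∃ j ∈ v, j ∉ u := by
      by_contra hc
      push_neg at hc
      exact hne (Finset.Subset.antisymm huv hc)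
    obtain ⟨j, hjv, hju⟩ := this
    have := anova_orth_aux hfm hf2 hjv hju
    rw [← this]
    exact integral_congr_ae (Filter.Eventually.of_forall fun x => mul_comm _ _)

lemma Qeq (hfm : Measurable f) (hf2 : MemLp f 2 (cubeMeasure d)) (s : Finset (Fin d)) :
    ∫ x, (Pint f s x) ^ 2 ∂cubeMeasure d
      = ∑ u ∈ s.powerset, ∫ x, (anova f u x) ^ 2 ∂cubeMeasure d := by
  have h1 : ∀ x, (Pint f s x) ^ 2
      = ∑ u ∈ s.powerset, ∑ v ∈ s.powerset, anova f u x * anova f v x := by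
    intro x
    rw [← sum_anova, sq, Finset.sum_mul_sum]
  rw [integral_congr_ae (Filter.Eventually.of_forall h1)]
  have hint : ∀ u v : Finset (Fin d),
      Integrable (fun x => anova f u x * anova f v x) (cubeMeasure d) := fun u v =>
    integrable_mul_L2 (anova_meas_memL2 hfm hf2 u).2 (anova_meas_memL2 hfm hf2 v).2
  rw [integral_finset_sum _ fun u _ => integrable_finset_sum _ fun v _ => hint u v]
  refine Finset.sum_congr rfl fun u hu => ?_
  rw [integral_finset_sum _ fun v _ => hint u v]
  rw [Finset.sum_eq_single u (fun v _ hvu => anova_orth hfm hf2 (Ne.symm hvu))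
    (fun hc => absurd hu hc)]
  refine integral_congr_ae (Filter.Eventually.of_forall fun x => ?_)
  show anova f u x * anova f u x = anova f u x ^ 2
  rw [sq]

lemma dOn_f_univ : DOn f Finset.univ := by
  intro p
  have : mix Finset.univ p = p.1 := by funext i; simp [mix]
  rw [this]

lemma Pint_erase (hfm : Measurable f) (j : Fin d) (x : Fin d → ℝ) :
    Pint f (Finset.univ.erase j) x = ∫ z, f (Function.update x j z) ∂nu := by
  unfold Pint
  have hmixform : ∀ y : Fin d → ℝ,
      mix (Finset.univ.erase j) (x, y) = Function.update x j (y j) := by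
    intro y; funext i
    by_cases hi : i = j
    · subst hi; simp [mix]
    · simp [mix, hi, Function.update_apply]
  simp_rw [hmixform]
  rw [← eval_map j, integral_map (measurable_pi_apply j).aemeasurable]
  exact (hfm.comp (measurable_update x)).aestronglyMeasurable.mono_measure le_rfl

lemma jansen (hfm : Measurable f) (hf2 : MemLp f 2 (cubeMeasure d)) (j : Fin d) :
    (1 / 2 : ℝ) * ∫ x, (∫ z in Set.Icc (0 : ℝ) 1,
        (f x - f (Function.update x j z)) ^ 2) ∂cubeMeasure d
      = (∫ x, (Pint f Finset.univ x) ^ 2 ∂cubeMeasure d)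
        - ∫ x, (Pint f (Finset.univ.erase j) x) ^ 2 ∂cubeMeasure d := by
  have h1 : MemLp (fun p : (Fin d → ℝ) × ℝ => f p.1) 2 ((cubeMeasure d).prod nu) :=
    memL2_comp hfm hf2 fst_mp'
  have h2 : MemLp (fun p : (Fin d → ℝ) × ℝ => f (Function.update p.1 j p.2)) 2
      ((cubeMeasure d).prod nu) := memL2_comp hfm hf2 (upd_mp j)
  have hInt : Integrable (fun p : (Fin d → ℝ) × ℝ =>
      (f p.1 - f (Function.update p.1 j p.2)) ^ 2) ((cubeMeasure d).prod nu) := by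
    have := (h1.sub h2).integrable_sq
    exact this
  have ha : Integrable (fun p : (Fin d → ℝ) × ℝ => f p.1 ^ 2) ((cubeMeasure d).prod nu) :=
    h1.integrable_sq
  have hb : Integrable (fun p : (Fin d → ℝ) × ℝ => f (Function.update p.1 j p.2) ^ 2)
      ((cubeMeasure d).prod nu) := h2.integrable_sq
  have hab : Integrable (fun p : (Fin d → ℝ) × ℝ => f p.1 * f (Function.update p.1 j p.2))
      ((cubeMeasure d).prod nu) := integrable_mul_L2 h1 h2
  have stepA : ∫ x, (∫ z in Set.Icc (0 : ℝ) 1,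
      (f x - f (Function.update x j z)) ^ 2) ∂cubeMeasure d
      = ∫ p : (Fin d → ℝ) × ℝ, (f p.1 - f (Function.update p.1 j p.2)) ^ 2
        ∂((cubeMeasure d).prod nu) := by
    have hInt' : Integrable (Function.uncurry fun x z =>
        (f x - f (Function.update x j z)) ^ 2) ((cubeMeasure d).prod nu) := hInt
    rw [← integral_integral hInt']
  have stepB : ∫ p : (Fin d → ℝ) × ℝ, (f p.1 - f (Function.update p.1 j p.2)) ^ 2
        ∂((cubeMeasure d).prod nu)
      = (∫ x, f x ^ 2 ∂cubeMeasure d) + (∫ x, f x ^ 2 ∂cubeMeasure d)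
        - 2 * ∫ p : (Fin d → ℝ) × ℝ, f p.1 * f (Function.update p.1 j p.2)
          ∂((cubeMeasure d).prod nu) := by
    have hexp : ∀ p : (Fin d → ℝ) × ℝ, (f p.1 - f (Function.update p.1 j p.2)) ^ 2
        = f p.1 ^ 2 + f (Function.update p.1 j p.2) ^ 2
          - 2 * (f p.1 * f (Function.update p.1 j p.2)) := by
      intro p; ring
    rw [integral_congr_ae (Filter.Eventually.of_forall hexp)]
    have hsum : Integrable (fun p : (Fin d → ℝ) × ℝ =>
        f p.1 ^ 2 + f (Function.update p.1 j p.2) ^ 2) ((cubeMeasure d).prod nu) := ha.add hb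
    rw [integral_sub hsum (hab.const_mul 2), integral_add ha hb,
      integral_const_mul]
    rw [integral_comp_mp (g := fun x => f x ^ 2) (hfm.pow_const 2) fst_mp',
      integral_comp_mp (g := fun x => f x ^ 2) (hfm.pow_const 2) (upd_mp j)]
  have stepC : ∫ p : (Fin d → ℝ) × ℝ, f p.1 * f (Function.update p.1 j p.2)
        ∂((cubeMeasure d).prod nu)
      = ∫ x, f x * Pint f (Finset.univ.erase j) x ∂cubeMeasure d := by
    rw [integral_prod _ hab]
    refine integral_congr_ae (Filter.Eventually.of_forall fun x => ?_)
    show (∫ z, f x * f (Function.update x j z) ∂nu)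
        = f x * Pint f (Finset.univ.erase j) x
    rw [integral_const_mul, Pint_erase hfm]
  have stepD : ∫ x, f x * Pint f (Finset.univ.erase j) x ∂cubeMeasure d
      = ∫ x, (Pint f (Finset.univ.erase j) x) ^ 2 ∂cubeMeasure d := by
    have := proj_adjoint hfm hf2 (measurable_Pint hfm (Finset.univ.erase j))
      (memL2_Pint hfm hf2 (Finset.univ.erase j))
      (dOn_Pint f (Finset.Subset.refl (Finset.univ.erase j)))
    rw [← this]
    refine integral_congr_ae (Filter.Eventually.of_forall fun x => ?_)
    show Pint f (Finset.univ.erase j) x * Pint f (Finset.univ.erase j) x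
        = Pint f (Finset.univ.erase j) x ^ 2
    rw [sq]
  have stepE : ∫ x, f x ^ 2 ∂cubeMeasure d
      = ∫ x, (Pint f Finset.univ x) ^ 2 ∂cubeMeasure d := by
    refine integral_congr_ae (Filter.Eventually.of_forall fun x => ?_)
    show f x ^ 2 = Pint f Finset.univ x ^ 2
    rw [Pint_of_dOn dOn_f_univ]
  rw [stepA, stepB, stepC, stepD, stepE]
  ring

lemma erase_powerset_eq (j : Fin d) :
    ((Finset.univ.erase j).powerset : Finset (Finset (Fin d)))
      = Finset.univ.filter (fun u => j ∉ u) := by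
  ext v
  simp [Finset.subset_erase]

lemma comb (c : Finset (Fin d) → ℝ) :
    ∑ u : Finset (Fin d), (u.card : ℝ) * c u
      = ∑ j : Fin d, ∑ u ∈ Finset.univ.filter (fun u : Finset (Fin d) => j ∈ u), c u := by
  have h1 : ∀ u : Finset (Fin d), (u.card : ℝ) * c u
      = ∑ j : Fin d, if j ∈ u then c u else 0 := by
    intro u
    rw [Finset.sum_ite_mem, Finset.univ_inter, Finset.sum_const, nsmul_eq_mul]
  simp_rw [h1]
  rw [Finset.sum_comm]
  exact Finset.sum_congr rfl fun j _ => (Finset.sum_filter _ _).symm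

theorem main_meas (hfm : Measurable f) (hf2 : MemLp f 2 (cubeMeasure d)) :
    ∑ u : Finset (Fin d), (u.card : ℝ) * ∫ x, (anova f u x) ^ 2 ∂cubeMeasure d
      = ∑ j : Fin d, (1 / 2) *
          ∫ x, (∫ z in Set.Icc (0 : ℝ) 1, (f x - f (Function.update x j z)) ^ 2)
            ∂cubeMeasure d := by
  rw [comb]
  refine Finset.sum_congr rfl fun j _ => ?_
  rw [jansen hfm hf2 j, Qeq hfm hf2, Qeq hfm hf2, Finset.powerset_univ,
    erase_powerset_eq j]
  have := Finset.sum_filter_add_sum_filter_not Finset.univ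
    (fun u : Finset (Fin d) => j ∈ u)
    (fun u => ∫ x, (anova f u x) ^ 2 ∂cubeMeasure d)
  linarith

end Core

section Transfer

variable {f g : (Fin d → ℝ) → ℝ}

lemma anova_ae_congr (hfg : f =ᵐ[cubeMeasure d] g) :
    ∀ u : Finset (Fin d), anova f u =ᵐ[cubeMeasure d] anova g u := by
  intro u
  induction u using Finset.strongInduction with
  | _ u ih =>
    have hP : ∀ᵐ x ∂cubeMeasure d, Pint f u x = Pint g u x := by
      have hcomp : (fun p : (Fin d → ℝ) × (Fin d → ℝ) => f (mix u p))
          =ᵐ[(cubeMeasure d).prod (cubeMeasure d)] fun p => g (mix u p) :=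
        (mix_mp u).quasiMeasurePreserving.ae_eq_comp hfg
      filter_upwards [Measure.ae_ae_of_ae_prod hcomp] with x hx
      exact integral_congr_ae hx
    have hIH : ∀ᵐ x ∂cubeMeasure d, ∀ v ∈ (u.ssubsets : Set (Finset (Fin d))),
        anova f v x = anova g v x := by
      rw [ae_ball_iff u.ssubsets.countable_toSet]
      intro v hv
      exact ih v (Finset.mem_ssubsets.mp (by exact_mod_cast hv))
    filter_upwards [hP, hIH] with x hx1 hx2
    rw [anova_eq, anova_eq, hx1]
    congr 1
    exact Finset.sum_congr rfl fun v hv => hx2 v (by exact_mod_cast hv)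

lemma sigma_congr (hfg : f =ᵐ[cubeMeasure d] g) (u : Finset (Fin d)) :
    ∫ x, (anova f u x) ^ 2 ∂cubeMeasure d = ∫ x, (anova g u x) ^ 2 ∂cubeMeasure d :=
  integral_congr_ae ((anova_ae_congr hfg u).mono fun x hx => by
    show anova f u x ^ 2 = anova g u x ^ 2
    rw [hx])

lemma rhs_congr (hfg : f =ᵐ[cubeMeasure d] g) (j : Fin d) :
    ∫ x, (∫ z in Set.Icc (0 : ℝ) 1, (f x - f (Function.update x j z)) ^ 2) ∂cubeMeasure d
      = ∫ x, (∫ z in Set.Icc (0 : ℝ) 1, (g x - g (Function.update x j z)) ^ 2)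
          ∂cubeMeasure d := by
  have h1 : (fun p : (Fin d → ℝ) × ℝ => f p.1)
      =ᵐ[(cubeMeasure d).prod nu] fun p => g p.1 :=
    fst_mp'.quasiMeasurePreserving.ae_eq_comp hfg
  have h2 : (fun p : (Fin d → ℝ) × ℝ => f (Function.update p.1 j p.2))
      =ᵐ[(cubeMeasure d).prod nu] fun p => g (Function.update p.1 j p.2) :=
    (upd_mp j).quasiMeasurePreserving.ae_eq_comp hfg
  have h3 : (fun p : (Fin d → ℝ) × ℝ => (f p.1 - f (Function.update p.1 j p.2)) ^ 2)
      =ᵐ[(cubeMeasure d).prod nu]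
        fun p => (g p.1 - g (Function.update p.1 j p.2)) ^ 2 := by
    filter_upwards [h1, h2] with p hp1 hp2
    rw [show f p.1 = g p.1 from hp1, show f (Function.update p.1 j p.2)
      = g (Function.update p.1 j p.2) from hp2]
  refine integral_congr_ae ?_
  filter_upwards [Measure.ae_ae_of_ae_prod h3] with x hx
  exact integral_congr_ae hx

end Transfer

end Stmt5Aux

/-- the dimension-weighted sum of ANOVA variance components equals
the sum over coordinates of Jansen's expression, `∑_u |u| σ_u² = ∑_j (1/2)∫∫
(f(x) − f(x_{−j}:z_j))² dz_j dx`; consequently, if `σ² = ∑_{u ≠ ∅} σ_u² > 0`, the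
mean dimension `ν(f) = ∑_u |u| σ_u² / σ²` equals `∑_j τ̄_j² / σ²` with
`τ̄_j² = ∑_{u : j ∈ u} σ_u²`. -/
theorem stmt_5 {d : ℕ} (f : (Fin d → ℝ) → ℝ) (hf : MemLp f 2 (cubeMeasure d)) :
    (∑ u : Finset (Fin d), (u.card : ℝ) * ∫ x, (anova f u x) ^ 2 ∂cubeMeasure d
        = ∑ j : Fin d, (1 / 2) *
            ∫ x, (∫ z in Set.Icc (0 : ℝ) 1, (f x - f (Function.update x j z)) ^ 2)
              ∂cubeMeasure d) ∧
      (0 < ∑ u ∈ Finset.univ.erase (∅ : Finset (Fin d)),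
            ∫ x, (anova f u x) ^ 2 ∂cubeMeasure d →
        (∑ u : Finset (Fin d), (u.card : ℝ) * ∫ x, (anova f u x) ^ 2 ∂cubeMeasure d) /
            (∑ u ∈ Finset.univ.erase (∅ : Finset (Fin d)),
              ∫ x, (anova f u x) ^ 2 ∂cubeMeasure d)
          = (∑ j : Fin d, ∑ u ∈ Finset.univ.filter (fun u : Finset (Fin d) => j ∈ u),
                ∫ x, (anova f u x) ^ 2 ∂cubeMeasure d) /
              (∑ u ∈ Finset.univ.erase (∅ : Finset (Fin d)),
                ∫ x, (anova f u x) ^ 2 ∂cubeMeasure d)) := by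
  have hfg : f =ᵐ[cubeMeasure d] (hf.1.mk f) := hf.1.ae_eq_mk
  have hgm : Measurable (hf.1.mk f) := hf.1.measurable_mk
  have hg2 : MemLp (hf.1.mk f) 2 (cubeMeasure d) := hf.ae_eq hfg
  constructor
  · calc ∑ u : Finset (Fin d), (u.card : ℝ) * ∫ x, (anova f u x) ^ 2 ∂cubeMeasure d
        = ∑ u : Finset (Fin d), (u.card : ℝ) *
            ∫ x, (anova (hf.1.mk f) u x) ^ 2 ∂cubeMeasure d := by
          refine Finset.sum_congr rfl fun u _ => ?_
          rw [Stmt5Aux.sigma_congr hfg u]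
      _ = ∑ j : Fin d, (1 / 2) *
            ∫ x, (∫ z in Set.Icc (0 : ℝ) 1,
              ((hf.1.mk f) x - (hf.1.mk f) (Function.update x j z)) ^ 2)
              ∂cubeMeasure d := Stmt5Aux.main_meas hgm hg2
      _ = ∑ j : Fin d, (1 / 2) *
            ∫ x, (∫ z in Set.Icc (0 : ℝ) 1, (f x - f (Function.update x j z)) ^ 2)
              ∂cubeMeasure d := by
          refine Finset.sum_congr rfl fun j _ => ?_
          rw [Stmt5Aux.rhs_congr hfg j]
  · intro _
    congr 1
    exact Stmt5Aux.comb _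
end
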